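/- arXiv:math/9404238 — 5 statements merged into one kernel-verified Lean document; each statement's English description precedes it below -/
import Mathlib

section
/- For every irrational ρ ∈ (0,1), the points (0, ρ) and (ρ, 0) belong to Λ_ρ and are extreme points of Λ_ρ. -/
open Filter Topology

noncomputable def alphaSeq (ρ : ℝ) (n : ℕ) : ℝ := (⌈(n : ℝ) * ρ⌉ : ℝ) - (n : ℝ) * ρ

noncomputable def vecRho (ρ : ℝ) (m n : ℕ) : ℝ × ℝ :=
  ((⌈(m : ℝ) * ρ⌉ : ℝ) / ((m : ℝ) + (n : ℝ) + 1),
   (⌈(n : ℝ) * ρ⌉ : ℝ) / ((m : ℝ) + (n : ℝ) + 1))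

noncomputable def LambdaSet (ρ : ℝ) : Set (ℝ × ℝ) :=
  closure (convexHull ℝ
    ({((0 : ℝ), (0 : ℝ))} ∪
      {p : ℝ × ℝ | ∃ m n : ℕ, alphaSeq ρ m < ρ ∧ alphaSeq ρ n < ρ ∧ p = vecRho ρ m n}))

/-- One-dimensional fact: if a convex combination of two points each `≥ c` equals `c`,
then both points equal `c`. -/
lemma aux_min_eq {a b u v c : ℝ} (ha : 0 < a) (hb : 0 < b) (hab : a + b = 1)
    (hu : c ≤ u) (hv : c ≤ v) (h : a * u + b * v = c) : u = c ∧ v = c := by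
  have key : a * (u - c) + b * (v - c) = 0 := by linear_combination h - c * hab
  have h1 : a * (u - c) = 0 := by
    refine le_antisymm ?_ (mul_nonneg ha.le (sub_nonneg.mpr hu))
    nlinarith [mul_nonneg hb.le (sub_nonneg.mpr hv)]
  have h2 : b * (v - c) = 0 := by linarith
  have u1 : u - c = 0 := (mul_eq_zero.mp h1).resolve_left ha.ne'
  have v1 : v - c = 0 := (mul_eq_zero.mp h2).resolve_left hb.ne'
  constructor <;> linarith

lemma aux_max_eq {a b u v c : ℝ} (ha : 0 < a) (hb : 0 < b) (hab : a + b = 1)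
    (hu : u ≤ c) (hv : v ≤ c) (h : a * u + b * v = c) : u = c ∧ v = c := by
  have := aux_min_eq (c := -c) (u := -u) (v := -v) ha hb hab
    (by linarith) (by linarith) (by linarith)
  constructor <;> linarith [this.1, this.2]

/-- Density-type lemma: arbitrarily large `n` with `Int.fract (n ρ) > 1 - ρ`. -/
lemma aux_exists_fract (ρ : ℝ) (hirr : Irrational ρ) (h0 : 0 < ρ) (h1 : ρ < 1) (N : ℕ) :
    ∃ n : ℕ, N ≤ n ∧ 1 - ρ < Int.fract ((n : ℝ) * ρ) := by
  by_contra hcon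
  push_neg at hcon
  have hlt : ∀ n : ℕ, N ≤ n → Int.fract ((n : ℝ) * ρ) < 1 - ρ := by
    intro n hn
    refine lt_of_le_of_ne (hcon n hn) ?_
    intro heq
    -- then (n+1) ρ would be an integer
    have : ((n : ℝ) + 1) * ρ = ((⌊(n : ℝ) * ρ⌋ + 1 : ℤ) : ℝ) := by
      have : Int.fract ((n : ℝ) * ρ) = (n : ℝ) * ρ - ⌊(n : ℝ) * ρ⌋ := rfl
      push_cast
      nlinarith [heq ▸ this]
    have hirr' : Irrational (((n : ℕ) + 1 : ℕ) * ρ) := hirr.natCast_mul (Nat.succ_ne_zero n)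
    apply hirr'.ne_int (⌊(n : ℝ) * ρ⌋ + 1)
    push_cast
    push_cast at this
    linarith
  have key : ∀ k : ℕ, Int.fract (((N + k : ℕ) : ℝ) * ρ) =
      Int.fract ((N : ℝ) * ρ) + k * ρ := by
    intro k
    induction k with
    | zero => simp
    | succ k ih =>
      have hb : Int.fract (((N + k : ℕ) : ℝ) * ρ) < 1 - ρ :=
        hlt _ (Nat.le_add_right N k)
      have hnn : 0 ≤ Int.fract (((N + k : ℕ) : ℝ) * ρ) := Int.fract_nonneg _
      have hx : ((N + (k + 1) : ℕ) : ℝ) * ρ =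
          (⌊((N + k : ℕ) : ℝ) * ρ⌋ : ℝ) + (Int.fract (((N + k : ℕ) : ℝ) * ρ) + ρ) := by
        have : Int.fract (((N + k : ℕ) : ℝ) * ρ) = ((N + k : ℕ) : ℝ) * ρ -
            ⌊((N + k : ℕ) : ℝ) * ρ⌋ := rfl
        push_cast
        push_cast at this
        linarith
      rw [hx, Int.fract_intCast_add,
        Int.fract_eq_self.mpr ⟨by linarith, by linarith⟩]
      push_cast
      push_cast at ih
      linarith
  obtain ⟨k, hk⟩ := exists_nat_gt (1 / ρ)
  have hk1 : 1 < (k : ℝ) * ρ := by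
    rw [div_lt_iff₀ h0] at hk; linarith
  have h2 := key k
  have h3 := Int.fract_lt_one (((N + k : ℕ) : ℝ) * ρ)
  have h4 := Int.fract_nonneg ((N : ℝ) * ρ)
  linarith

lemma aux_alpha_nonneg (ρ : ℝ) (n : ℕ) : 0 ≤ alphaSeq ρ n :=
  sub_nonneg.mpr (Int.le_ceil _)

lemma aux_alpha_lt (ρ : ℝ) (n : ℕ) (h : 1 - ρ < Int.fract ((n : ℝ) * ρ)) :
    alphaSeq ρ n < ρ := by
  have h1 : (⌈(n : ℝ) * ρ⌉ : ℝ) ≤ (⌊(n : ℝ) * ρ⌋ : ℝ) + 1 := by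
    exact_mod_cast Int.ceil_le_floor_add_one ((n : ℝ) * ρ)
  have h2 : Int.fract ((n : ℝ) * ρ) = (n : ℝ) * ρ - ⌊(n : ℝ) * ρ⌋ := rfl
  unfold alphaSeq
  linarith

/-- The generating set lies in the box `[0,ρ] × [0,ρ]`. -/
lemma aux_box (ρ : ℝ) (h0 : 0 < ρ) :
    LambdaSet ρ ⊆ Set.Icc (0 : ℝ) ρ ×ˢ Set.Icc (0 : ℝ) ρ := by
  have hconv : Convex ℝ (Set.Icc (0 : ℝ) ρ ×ˢ Set.Icc (0 : ℝ) ρ) :=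
    (convex_Icc _ _).prod (convex_Icc _ _)
  have hcl : IsClosed (Set.Icc (0 : ℝ) ρ ×ˢ Set.Icc (0 : ℝ) ρ) :=
    isClosed_Icc.prod isClosed_Icc
  refine closure_minimal (convexHull_min ?_ hconv) hcl
  rintro p (hp | ⟨m, n, hm, hn, rfl⟩)
  · simp only [Set.mem_singleton_iff] at hp
    subst hp
    exact ⟨⟨le_refl _, h0.le⟩, ⟨le_refl _, h0.le⟩⟩
  · have hden : (0 : ℝ) < (m : ℝ) + (n : ℝ) + 1 := by positivity
    have hm' : (0 : ℝ) ≤ (m : ℝ) := Nat.cast_nonneg m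
    have hn' : (0 : ℝ) ≤ (n : ℝ) := Nat.cast_nonneg n
    have hcm : (m : ℝ) * ρ ≤ (⌈(m : ℝ) * ρ⌉ : ℝ) := Int.le_ceil _
    have hcn : (n : ℝ) * ρ ≤ (⌈(n : ℝ) * ρ⌉ : ℝ) := Int.le_ceil _
    unfold alphaSeq at hm hn
    simp only [vecRho, Set.mem_prod, Set.mem_Icc]
    refine ⟨⟨?_, ?_⟩, ?_, ?_⟩
    · apply div_nonneg _ hden.le; nlinarith
    · rw [div_le_iff₀ hden]; nlinarith
    · apply div_nonneg _ hden.le; nlinarith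
    · rw [div_le_iff₀ hden]; nlinarith

lemma aux_mem1 (ρ : ℝ) (hirr : Irrational ρ) (h0 : 0 < ρ) (h1 : ρ < 1) :
    ((0 : ℝ), ρ) ∈ LambdaSet ρ := by
  rw [LambdaSet, Metric.mem_closure_iff]
  intro ε hε
  obtain ⟨N, hN⟩ := exists_nat_gt (1 / ε)
  obtain ⟨n, hnN, hn⟩ := aux_exists_fract ρ hirr h0 h1 N
  have han : alphaSeq ρ n < ρ := aux_alpha_lt ρ n hn
  have ha0 : alphaSeq ρ 0 < ρ := by simp [alphaSeq]; exact h0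
  refine ⟨vecRho ρ 0 n, subset_convexHull ℝ _ (Or.inr ⟨0, n, ha0, han, rfl⟩), ?_⟩
  have hden : (0 : ℝ) < (0 : ℝ) + (n : ℝ) + 1 := by positivity
  have hNε : 1 < (N : ℝ) * ε := by rw [div_lt_iff₀ hε] at hN; linarith
  have hnN' : (N : ℝ) ≤ (n : ℝ) := Nat.cast_le.mpr hnN
  have hεn : 1 < ε * ((n : ℝ) + 1) := by nlinarith
  have hcn : (n : ℝ) * ρ ≤ (⌈(n : ℝ) * ρ⌉ : ℝ) := Int.le_ceil _
  have halt : (⌈(n : ℝ) * ρ⌉ : ℝ) - (n : ℝ) * ρ < ρ := han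
  have hfst : (⌈(0 : ℕ) * ρ⌉ : ℝ) = 0 := by norm_num
  have habs : |ρ - (⌈(n : ℝ) * ρ⌉ : ℝ) / ((0 : ℝ) + (n : ℝ) + 1)| < ε := by
    rw [abs_sub_lt_iff]
    constructor
    · rw [sub_lt_iff_lt_add, ← sub_lt_iff_lt_add', lt_div_iff₀ hden]
      nlinarith
    · rw [sub_lt_iff_lt_add, div_lt_iff₀ hden]
      nlinarith
  rw [vecRho, Prod.dist_eq]
  simp only [Nat.cast_zero, Real.dist_eq, max_lt_iff]
  constructor
  · norm_num; exact hε
  · exact habs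

lemma aux_mem2 (ρ : ℝ) (hirr : Irrational ρ) (h0 : 0 < ρ) (h1 : ρ < 1) :
    (ρ, (0 : ℝ)) ∈ LambdaSet ρ := by
  rw [LambdaSet, Metric.mem_closure_iff]
  intro ε hε
  obtain ⟨N, hN⟩ := exists_nat_gt (1 / ε)
  obtain ⟨n, hnN, hn⟩ := aux_exists_fract ρ hirr h0 h1 N
  have han : alphaSeq ρ n < ρ := aux_alpha_lt ρ n hn
  have ha0 : alphaSeq ρ 0 < ρ := by simp [alphaSeq]; exact h0
  refine ⟨vecRho ρ n 0, subset_convexHull ℝ _ (Or.inr ⟨n, 0, han, ha0, rfl⟩), ?_⟩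
  have hden : (0 : ℝ) < (n : ℝ) + (0 : ℝ) + 1 := by positivity
  have hNε : 1 < (N : ℝ) * ε := by rw [div_lt_iff₀ hε] at hN; linarith
  have hnN' : (N : ℝ) ≤ (n : ℝ) := Nat.cast_le.mpr hnN
  have hεn : 1 < ε * ((n : ℝ) + 1) := by nlinarith
  have hcn : (n : ℝ) * ρ ≤ (⌈(n : ℝ) * ρ⌉ : ℝ) := Int.le_ceil _
  have halt : (⌈(n : ℝ) * ρ⌉ : ℝ) - (n : ℝ) * ρ < ρ := han
  have habs : |ρ - (⌈(n : ℝ) * ρ⌉ : ℝ) / ((n : ℝ) + (0 : ℝ) + 1)| < ε := by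
    rw [abs_sub_lt_iff]
    constructor
    · rw [sub_lt_iff_lt_add, ← sub_lt_iff_lt_add', lt_div_iff₀ hden]
      nlinarith
    · rw [sub_lt_iff_lt_add, div_lt_iff₀ hden]
      nlinarith
  rw [vecRho, Prod.dist_eq]
  simp only [Nat.cast_zero, Real.dist_eq, max_lt_iff]
  constructor
  · exact habs
  · norm_num; exact hε

theorem stmt2 (ρ : ℝ) (hirr : Irrational ρ) (h0 : 0 < ρ) (h1 : ρ < 1) :
    ((0 : ℝ), ρ) ∈ LambdaSet ρ ∧ (ρ, (0 : ℝ)) ∈ LambdaSet ρ ∧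
    ((0 : ℝ), ρ) ∈ Set.extremePoints ℝ (LambdaSet ρ) ∧
    (ρ, (0 : ℝ)) ∈ Set.extremePoints ℝ (LambdaSet ρ) := by
  have hbox := aux_box ρ h0
  have hm1 := aux_mem1 ρ hirr h0 h1
  have hm2 := aux_mem2 ρ hirr h0 h1
  refine ⟨hm1, hm2, ⟨hm1, ?_⟩, ⟨hm2, ?_⟩⟩
  · rintro x hx y hy ⟨a, b, ha, hb, hab, habeq⟩
    obtain ⟨⟨hx1, hx2⟩, ⟨hx3, hx4⟩⟩ := hbox hx
    obtain ⟨⟨hy1, hy2⟩, ⟨hy3, hy4⟩⟩ := hbox hy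
    have e1 : a * x.1 + b * y.1 = 0 := congrArg Prod.fst habeq
    have e2 : a * x.2 + b * y.2 = ρ := congrArg Prod.snd habeq
    have c1 := aux_min_eq ha hb hab hx1 hy1 e1
    have c2 := aux_max_eq ha hb hab hx4 hy4 e2
    exact Prod.ext c1.1 c2.1
  · rintro x hx y hy ⟨a, b, ha, hb, hab, habeq⟩
    obtain ⟨⟨hx1, hx2⟩, ⟨hx3, hx4⟩⟩ := hbox hx
    obtain ⟨⟨hy1, hy2⟩, ⟨hy3, hy4⟩⟩ := hbox hy
    have e1 : a * x.1 + b * y.1 = ρ := congrArg Prod.fst habeq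
    have e2 : a * x.2 + b * y.2 = 0 := congrArg Prod.snd habeq
    have c1 := aux_max_eq ha hb hab hx2 hy2 e1
    have c2 := aux_min_eq ha hb hab hx3 hy3 e2
    exact Prod.ext c1.1 c2.1
end

section
/- For every irrational ρ ∈ (0,1), the set of extreme points of Λ_ρ is infinite; in particular Λ_ρ is not a polygon. -/
open Filter Topology

namespace Stmt3Aux

open Set

/-- The set of generator points `ρ_{m,n}`. -/
def Sgen (ρ : ℝ) : Set (ℝ × ℝ) :=
  {p : ℝ × ℝ | ∃ m n : ℕ, alphaSeq ρ m < ρ ∧ alphaSeq ρ n < ρ ∧ p = vecRho ρ m n}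

/-- The full generating set. -/
def Gset (ρ : ℝ) : Set (ℝ × ℝ) := {((0 : ℝ), (0 : ℝ))} ∪ Sgen ρ

lemma lambda_eq (ρ : ℝ) : LambdaSet ρ = closure (convexHull ℝ (Gset ρ)) := rfl

lemma alpha_nonneg (ρ : ℝ) (n : ℕ) : 0 ≤ alphaSeq ρ n :=
  sub_nonneg.2 (Int.le_ceil _)

lemma alpha_lt_one (ρ : ℝ) (n : ℕ) : alphaSeq ρ n < 1 := by
  have := Int.ceil_lt_add_one ((n : ℝ) * ρ)
  simp only [alphaSeq]; linarith

lemma alpha_zero (ρ : ℝ) : alphaSeq ρ 0 = 0 := by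
  simp [alphaSeq]

lemma irrational_nat_mul {ρ : ℝ} (hirr : Irrational ρ) {n : ℕ} (hn : n ≠ 0) :
    Irrational ((n : ℝ) * ρ) :=
  hirr.natCast_mul hn

lemma alpha_pos {ρ : ℝ} (hirr : Irrational ρ) {n : ℕ} (hn : n ≠ 0) :
    0 < alphaSeq ρ n := by
  rcases lt_or_eq_of_le (alpha_nonneg ρ n) with h | h
  · exact h
  · exfalso
    have h2 : (n : ℝ) * ρ = ((⌈(n : ℝ) * ρ⌉ : ℤ) : ℝ) := by
      simp only [alphaSeq] at h
      linarith
    exact (irrational_nat_mul hirr hn).ne_int _ h2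

lemma ceil_eq_alpha (ρ : ℝ) (n : ℕ) :
    ((⌈(n : ℝ) * ρ⌉ : ℤ) : ℝ) = (n : ℝ) * ρ + alphaSeq ρ n := by
  simp [alphaSeq]

lemma denom_pos (m n : ℕ) : (0 : ℝ) < (m : ℝ) + (n : ℝ) + 1 := by positivity

/-- numerator of `N` on a generator -/
lemma vec_N (ρ : ℝ) (m n : ℕ) :
    (vecRho ρ m n).1 + (vecRho ρ m n).2 - ρ
      = (alphaSeq ρ m + alphaSeq ρ n - ρ) / ((m : ℝ) + (n : ℝ) + 1) := by
  have hc := denom_pos m n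
  simp only [vecRho]
  rw [ceil_eq_alpha, ceil_eq_alpha]
  field_simp
  ring

/-- numerator of `D` on a generator -/
lemma vec_D (ρ : ℝ) (m n : ℕ) :
    ρ - (vecRho ρ m n).1 + (vecRho ρ m n).2
      = ((2 * (n : ℝ) + 1) * ρ - alphaSeq ρ m + alphaSeq ρ n) / ((m : ℝ) + (n : ℝ) + 1) := by
  have hc := denom_pos m n
  simp only [vecRho]
  rw [ceil_eq_alpha, ceil_eq_alpha]
  field_simp
  ring

lemma vec_x (ρ : ℝ) (m n : ℕ) :
    (vecRho ρ m n).1 = ((m : ℝ) * ρ + alphaSeq ρ m) / ((m : ℝ) + (n : ℝ) + 1) := by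
  simp only [vecRho]; rw [ceil_eq_alpha]

lemma vec_y (ρ : ℝ) (m n : ℕ) :
    (vecRho ρ m n).2 = ((n : ℝ) * ρ + alphaSeq ρ n) / ((m : ℝ) + (n : ℝ) + 1) := by
  simp only [vecRho]; rw [ceil_eq_alpha]

lemma gen_mem_lambda {ρ : ℝ} {p : ℝ × ℝ} (hp : p ∈ Gset ρ) : p ∈ LambdaSet ρ :=
  subset_closure (subset_convexHull ℝ _ hp)

lemma lambda_convex (ρ : ℝ) : Convex ℝ (LambdaSet ρ) :=
  (convex_convexHull ℝ _).closure

lemma lambda_subset {ρ : ℝ} {C : Set (ℝ × ℝ)} (hC : Convex ℝ C) (hC' : IsClosed C)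
    (h : Gset ρ ⊆ C) : LambdaSet ρ ⊆ C :=
  closure_minimal (convexHull_min h hC) hC'

lemma isLinearMap_combo (a b : ℝ) : IsLinearMap ℝ (fun p : ℝ × ℝ => a * p.1 + b * p.2) := by
  constructor
  · intro p q; simp [Prod.fst_add, Prod.snd_add]; ring
  · intro c p; simp [Prod.smul_fst, Prod.smul_snd, smul_eq_mul]; ring

lemma lambda_x_le {ρ : ℝ} (h0 : 0 < ρ) : ∀ p ∈ LambdaSet ρ, p.1 ≤ ρ := by
  intro p hp
  have : LambdaSet ρ ⊆ {q : ℝ × ℝ | q.1 ≤ ρ} := by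
    apply lambda_subset
    · have := convex_halfSpace_le (isLinearMap_combo 1 0) ρ
      simpa using this
    · have : Continuous fun q : ℝ × ℝ => q.1 := continuous_fst
      exact isClosed_le this continuous_const
    · rintro q (hq | ⟨m, n, hm, hn, rfl⟩)
      · simp only [mem_singleton_iff] at hq
        subst hq; simpa using h0.le
      · have hc := denom_pos m n
        rw [mem_setOf_eq, vec_x, div_le_iff₀ hc]
        have h1 : alphaSeq ρ m < ρ := hm
        have h2 : (0:ℝ) ≤ n := Nat.cast_nonneg n
        nlinarith [alpha_nonneg ρ m]
  exact this hp

lemma lambda_y_nonneg {ρ : ℝ} (h0 : 0 < ρ) : ∀ p ∈ LambdaSet ρ, 0 ≤ p.2 := by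
  intro p hp
  have : LambdaSet ρ ⊆ {q : ℝ × ℝ | 0 ≤ q.2} := by
    apply lambda_subset
    · have := convex_halfSpace_le (isLinearMap_combo 0 (-1)) 0
      have h2 : {w : ℝ × ℝ | 0 * w.1 + -1 * w.2 ≤ 0} = {q : ℝ × ℝ | 0 ≤ q.2} := by
        ext q
        simp only [Set.mem_setOf_eq]
        constructor <;> intro h <;> linarith
      rwa [h2] at this
    · exact isClosed_le continuous_const continuous_snd
    · rintro q (hq | ⟨m, n, hm, hn, rfl⟩)
      · simp only [mem_singleton_iff] at hq
        subst hq; simp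
      · have hc := denom_pos m n
        rw [mem_setOf_eq, vec_y]
        have h2 : (0:ℝ) ≤ n := Nat.cast_nonneg n
        have := alpha_nonneg ρ n
        positivity
  exact this hp

lemma lambda_compact {ρ : ℝ} (h0 : 0 < ρ) (h1 : ρ < 1) : IsCompact (LambdaSet ρ) := by
  have hbox : LambdaSet ρ ⊆ Icc ((0:ℝ), (0:ℝ)) ((1:ℝ), (1:ℝ)) := by
    apply lambda_subset
    · exact convex_Icc _ _
    · exact isClosed_Icc
    · rintro q (hq | ⟨m, n, hm, hn, rfl⟩)
      · simp only [mem_singleton_iff] at hq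
        subst hq
        constructor <;> constructor <;> norm_num
      · have hc := denom_pos m n
        have hm1 : alphaSeq ρ m < 1 := alpha_lt_one ρ m
        have hn1 : alphaSeq ρ n < 1 := alpha_lt_one ρ n
        have hm0 := alpha_nonneg ρ m
        have hn0 := alpha_nonneg ρ n
        have hmρ : (m:ℝ) * ρ ≤ (m:ℝ) := by
          nlinarith [Nat.cast_nonneg (α := ℝ) m]
        have hnρ : (n:ℝ) * ρ ≤ (n:ℝ) := by
          nlinarith [Nat.cast_nonneg (α := ℝ) n]
        have hmρ0 : (0:ℝ) ≤ (m:ℝ) * ρ := by positivity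
        have hnρ0 : (0:ℝ) ≤ (n:ℝ) * ρ := by positivity
        constructor
        · constructor
          · rw [vec_x]; positivity
          · rw [vec_y]; positivity
        · constructor
          · rw [vec_x, div_le_one hc]
            have : (0:ℝ) ≤ (n:ℝ) := Nat.cast_nonneg n
            linarith
          · rw [vec_y, div_le_one hc]
            have : (0:ℝ) ≤ (m:ℝ) := Nat.cast_nonneg m
            linarith
  exact isCompact_Icc.of_isClosed_subset isClosed_closure hbox

/-- Multiples of a small positive number hit any interval of bigger length. -/
lemma exists_nat_mul_mem {g δ u : ℝ} (hg : 0 < g) (hgδ : g < δ) (hu : 0 ≤ u) :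
    ∃ k : ℕ, 1 ≤ k ∧ u < (k : ℝ) * g ∧ (k : ℝ) * g < u + δ := by
  have hfl : (0 : ℤ) ≤ ⌊u / g⌋ := Int.floor_nonneg.2 (by positivity)
  refine ⟨⌊u / g⌋.toNat + 1, by omega, ?_, ?_⟩
  · have h1 : ((⌊u / g⌋.toNat + 1 : ℕ) : ℝ) = (⌊u / g⌋ : ℝ) + 1 := by
      have h2 : ((⌊u / g⌋.toNat : ℤ) : ℝ) = ((⌊u / g⌋ : ℤ) : ℝ) := by
        rw [Int.toNat_of_nonneg hfl]
      push_cast at h2 ⊢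
      linarith
    rw [h1]
    have := Int.lt_floor_add_one (u / g)
    calc u = (u / g) * g := by field_simp
    _ < ((⌊u / g⌋ : ℝ) + 1) * g := by
        apply mul_lt_mul_of_pos_right _ hg
        exact this
  · have h1 : ((⌊u / g⌋.toNat + 1 : ℕ) : ℝ) = (⌊u / g⌋ : ℝ) + 1 := by
      have h2 : ((⌊u / g⌋.toNat : ℤ) : ℝ) = ((⌊u / g⌋ : ℤ) : ℝ) := by
        rw [Int.toNat_of_nonneg hfl]
      push_cast at h2 ⊢
      linarith
    rw [h1]
    have h2 := Int.floor_le (u / g)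
    have : ((⌊u / g⌋ : ℝ) + 1) * g ≤ (u / g) * g + g := by
      have := mul_le_mul_of_nonneg_right h2 hg.le
      nlinarith
    have h3 : (u / g) * g = u := by field_simp
    nlinarith

lemma dense_sub {ρ : ℝ} (hirr : Irrational ρ) :
    Dense ((AddSubgroup.zmultiples (1:ℝ) ⊔ AddSubgroup.zmultiples ρ : AddSubgroup ℝ) : Set ℝ) := by
  rcases AddSubgroup.dense_or_cyclic (AddSubgroup.zmultiples (1:ℝ) ⊔ AddSubgroup.zmultiples ρ)
    with h | ⟨a, ha⟩
  · exact h
  · exfalso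
    have h1 : (1:ℝ) ∈ AddSubgroup.zmultiples (1:ℝ) ⊔ AddSubgroup.zmultiples ρ :=
      AddSubgroup.mem_sup_left (AddSubgroup.mem_zmultiples 1)
    have hρ : ρ ∈ AddSubgroup.zmultiples (1:ℝ) ⊔ AddSubgroup.zmultiples ρ :=
      AddSubgroup.mem_sup_right (AddSubgroup.mem_zmultiples ρ)
    rw [ha, AddSubgroup.mem_closure_singleton] at h1 hρ
    obtain ⟨n, hn⟩ := h1
    obtain ⟨k, hk⟩ := hρ
    have hn0 : (n : ℝ) ≠ 0 := by
      intro h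
      rw [zsmul_eq_mul, h, zero_mul] at hn
      norm_num at hn
    apply hirr
    refine ⟨(k : ℚ) / (n : ℚ), ?_⟩
    rw [zsmul_eq_mul] at hn hk
    push_cast
    have hane : a = 1 / (n : ℝ) := by field_simp at hn ⊢; linarith
    rw [← hk, hane]
    field_simp

/-- Density: `alphaSeq` comes arbitrarily close to `ρ` from below. -/
lemma exists_alpha_near {ρ : ℝ} (hirr : Irrational ρ) (h0 : 0 < ρ) (h1 : ρ < 1)
    {ε : ℝ} (hε : 0 < ε) :
    ∃ m : ℕ, m ≠ 0 ∧ ρ - ε < alphaSeq ρ m ∧ alphaSeq ρ m < ρ := by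
  set δ := min ε ρ with hδdef
  have hδ : 0 < δ := lt_min hε h0
  have hδε : δ ≤ ε := min_le_left _ _
  have hδρ : δ ≤ ρ := min_le_right _ _
  obtain ⟨g, hgS, hg⟩ := (dense_sub hirr).exists_mem_open isOpen_Ioo
    (nonempty_Ioo.2 hδ)
  obtain ⟨y, hy, z, hz, hyz⟩ := AddSubgroup.mem_sup.1 hgS
  obtain ⟨A, hA⟩ := AddSubgroup.mem_zmultiples_iff.1 hy
  obtain ⟨B, hB⟩ := AddSubgroup.mem_zmultiples_iff.1 hz
  rw [zsmul_eq_mul, mul_one] at hA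
  rw [zsmul_eq_mul] at hB
  have hgab : g = (A : ℝ) + (B : ℝ) * ρ := by rw [← hyz, ← hA, ← hB]
  have hg0 : 0 < g := hg.1
  have hg1 : g < δ := hg.2
  rcases lt_trichotomy B 0 with hBneg | hB0 | hBpos
  · -- B < 0 : target interval (ρ - δ, ρ)
    obtain ⟨k, hk1, hklo, hkhi⟩ := exists_nat_mul_mem hg0 hg1 (by linarith : (0:ℝ) ≤ ρ - δ)
    refine ⟨k * (-B).toNat, ?_, ?_, ?_⟩
    · have : (-B).toNat ≠ 0 := by omega
      positivity
    all_goals {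
      have hBt : (((-B).toNat : ℤ) : ℝ) = -(B : ℝ) := by
        have : ((-B).toNat : ℤ) = -B := Int.toNat_of_nonneg (by omega)
        rw [this]; push_cast; ring
      have hmul : ((k * (-B).toNat : ℕ) : ℝ) * ρ
          = ((k * A : ℤ) : ℝ) - (k : ℝ) * g := by
        push_cast [hgab]
        have : (((-B).toNat : ℕ) : ℝ) = -(B : ℝ) := by exact_mod_cast hBt
        rw [this]; ring
      have hkg0 : 0 < (k:ℝ) * g := by positivity
      have hkg1 : (k:ℝ) * g < 1 := by
        have : ρ - δ + δ = ρ := by ring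
        linarith
      have hceil : (⌈((k * (-B).toNat : ℕ) : ℝ) * ρ⌉ : ℤ) = k * A := by
        rw [hmul]
        rw [show ((k * A : ℤ) : ℝ) - (k : ℝ) * g = -((k:ℝ)*g) + ((k * A : ℤ) : ℝ) by ring]
        rw [Int.ceil_add_intCast]
        have : ⌈-((k:ℝ)*g)⌉ = 0 := by
          rw [Int.ceil_eq_zero_iff, Set.mem_Ioc]
          constructor
          · norm_num; linarith
          · linarith
        rw [this]; ring
      have halpha : alphaSeq ρ (k * (-B).toNat) = (k : ℝ) * g := by
        rw [alphaSeq, hceil, hmul]; ring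
      rw [halpha]
      first
        | linarith
        | linarith
    }
  · -- B = 0 : impossible
    exfalso
    subst hB0
    rw [hgab] at hg0 hg1
    simp at hg0 hg1
    have : (1:ℝ) ≤ A := by exact_mod_cast hg0
    linarith
  · -- B > 0 : target interval (1 - ρ, 1 - ρ + δ)
    obtain ⟨k, hk1, hklo, hkhi⟩ := exists_nat_mul_mem hg0 hg1 (by linarith : (0:ℝ) ≤ 1 - ρ)
    refine ⟨k * B.toNat, ?_, ?_, ?_⟩
    · have : B.toNat ≠ 0 := by omega
      positivity
    all_goals {
      have hBt : ((B.toNat : ℕ) : ℝ) = (B : ℝ) := by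
        have : (B.toNat : ℤ) = B := Int.toNat_of_nonneg (by omega)
        exact_mod_cast congrArg (Int.cast : ℤ → ℝ) this
      have hmul : ((k * B.toNat : ℕ) : ℝ) * ρ
          = (k : ℝ) * g - ((k * A : ℤ) : ℝ) := by
        push_cast [hgab, hBt]
        ring
      have hkg0 : 1 - ρ < (k:ℝ) * g := hklo
      have hkg1 : (k:ℝ) * g ≤ 1 := by linarith
      have hceil : (⌈((k * B.toNat : ℕ) : ℝ) * ρ⌉ : ℤ) = 1 - k * A := by
        rw [hmul, Int.ceil_sub_intCast]
        have : ⌈(k:ℝ)*g⌉ = 1 := by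
          rw [Int.ceil_eq_iff]
          constructor
          · push_cast; linarith
          · push_cast; linarith
        rw [this]
      have halpha : alphaSeq ρ (k * B.toNat) = 1 - (k : ℝ) * g := by
        rw [alphaSeq, hceil, hmul]; push_cast; ring
      rw [halpha]
      first
        | linarith
        | linarith
    }

/-- the fractional-linear slope function at scale `n`. -/
noncomputable def psi (ρ : ℝ) (n : ℕ) : ℝ :=
  alphaSeq ρ n / (2 * (n : ℝ) * ρ + alphaSeq ρ n)

lemma psi_pos {ρ : ℝ} (hirr : Irrational ρ) (h0 : 0 < ρ) {n : ℕ} (hn : n ≠ 0) :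
    0 < psi ρ n := by
  have h := alpha_pos hirr hn
  have hnn : (1:ℝ) ≤ (n:ℝ) := by exact_mod_cast Nat.one_le_iff_ne_zero.2 hn
  apply div_pos h
  nlinarith

lemma psi_lt {ρ : ℝ} (hirr : Irrational ρ) (h0 : 0 < ρ) {n : ℕ} (hn : n ≠ 0)
    (hadm : alphaSeq ρ n < ρ) : psi ρ n < 1 / (2 * (n : ℝ)) := by
  have h := alpha_pos hirr hn
  have hnn : (1:ℝ) ≤ (n:ℝ) := by exact_mod_cast Nat.one_le_iff_ne_zero.2 hn
  rw [psi, div_lt_div_iff₀ (by nlinarith) (by nlinarith)]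
  nlinarith

/-- Existence of the maximizing scale `n*`. -/
lemma exists_psi_max {ρ : ℝ} (hirr : Irrational ρ) (h0 : 0 < ρ) (h1 : ρ < 1) :
    ∃ nst : ℕ, nst ≠ 0 ∧ alphaSeq ρ nst < ρ ∧
      ∀ n : ℕ, n ≠ 0 → alphaSeq ρ n < ρ → psi ρ n ≤ psi ρ nst := by
  classical
  obtain ⟨n₁, hn₁0, _, hn₁adm⟩ := exists_alpha_near hirr h0 h1 h0
  set c := psi ρ n₁ with hcdef
  have hc : 0 < c := psi_pos hirr h0 hn₁0
  set K := n₁ + Nat.ceil (1 / c) with hKdef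
  set F := (Finset.range (K + 1)).filter (fun n => n ≠ 0 ∧ alphaSeq ρ n < ρ) with hFdef
  have hn₁F : n₁ ∈ F := by
    rw [hFdef, Finset.mem_filter, Finset.mem_range]
    exact ⟨by omega, hn₁0, hn₁adm⟩
  have hFne : F.Nonempty := ⟨n₁, hn₁F⟩
  obtain ⟨nst, hnstF, hsup⟩ := F.exists_max_image (fun n : ℕ => psi ρ n) hFne
  rw [hFdef, Finset.mem_filter] at hnstF
  refine ⟨nst, hnstF.2.1, hnstF.2.2, ?_⟩
  intro n hn hadm
  have hcle : c ≤ psi ρ nst := hsup n₁ hn₁F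
  by_cases hnK : n ≤ K
  · apply hsup
    rw [hFdef, Finset.mem_filter, Finset.mem_range]
    exact ⟨by omega, hn, hadm⟩
  · have h2 : psi ρ n < 1 / (2 * (n:ℝ)) := psi_lt hirr h0 hn hadm
    have h3 : (1:ℝ) / c ≤ Nat.ceil (1 / c) := Nat.le_ceil _
    have h4 : (Nat.ceil (1 / c) : ℝ) ≤ (n : ℝ) := by
      have : Nat.ceil (1/c) ≤ n := by omega
      exact_mod_cast this
    have h5 : (1:ℝ)/c ≤ (n:ℝ) := le_trans h3 h4
    have hnpos : (0:ℝ) < (n:ℝ) := by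
      have : n ≠ 0 := hn
      positivity
    have h6 : 1 / (2*(n:ℝ)) < c := by
      rw [div_lt_iff₀ (by positivity)]
      rw [div_le_iff₀ hc] at h5
      nlinarith
    linarith

/-- Key inequality: every generator lies strictly below the critical line. -/
lemma key_ineq {ρ : ℝ} (hirr : Irrational ρ) (h0 : 0 < ρ) (h1 : ρ < 1)
    {nst : ℕ} (hnst : nst ≠ 0) (hadmst : alphaSeq ρ nst < ρ)
    (hmax : ∀ n : ℕ, n ≠ 0 → alphaSeq ρ n < ρ → psi ρ n ≤ psi ρ nst)
    {m n : ℕ} (hm : alphaSeq ρ m < ρ) (hn : alphaSeq ρ n < ρ) :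
    alphaSeq ρ m + alphaSeq ρ n - ρ
      < psi ρ nst * ((2 * (n:ℝ) + 1) * ρ - alphaSeq ρ m + alphaSeq ρ n) := by
  have hΨ : 0 < psi ρ nst := psi_pos hirr h0 hnst
  by_cases hn0 : n = 0
  · subst hn0
    rw [alpha_zero]
    have : (0:ℝ) < psi ρ nst * ((2 * (0:ℝ) + 1) * ρ - alphaSeq ρ m + 0) := by
      apply mul_pos hΨ
      push_cast
      linarith
    push_cast at this ⊢
    linarith
  · have hα : 0 < alphaSeq ρ n := alpha_pos hirr hn0
    have hpsi_le : psi ρ n ≤ psi ρ nst := hmax n hn0 hn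
    have hden : (0:ℝ) < 2 * (n:ℝ) * ρ + alphaSeq ρ n := by
      have : (1:ℝ) ≤ (n:ℝ) := by exact_mod_cast Nat.one_le_iff_ne_zero.2 hn0
      nlinarith
    have hexact : alphaSeq ρ n = psi ρ n * (2 * (n:ℝ) * ρ + alphaSeq ρ n) := by
      rw [psi]; field_simp
    have h2 : psi ρ n * (2 * (n:ℝ) * ρ + alphaSeq ρ n)
        ≤ psi ρ nst * (2 * (n:ℝ) * ρ + alphaSeq ρ n) :=
      mul_le_mul_of_nonneg_right hpsi_le hden.le
    have h3 : psi ρ nst * (2 * (n:ℝ) * ρ + alphaSeq ρ n)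
        ≤ psi ρ nst * ((2 * (n:ℝ) + 1) * ρ - alphaSeq ρ m + alphaSeq ρ n) := by
      apply mul_le_mul_of_nonneg_left _ hΨ.le
      linarith
    linarith

/-- Approaching the supremum: for any `l < Ψ` some generator at scale `nst` beats `l`. -/
lemma approx_ineq {ρ : ℝ} (hirr : Irrational ρ) (h0 : 0 < ρ) (h1 : ρ < 1)
    {nst : ℕ} (hnst : nst ≠ 0) (hadm : alphaSeq ρ nst < ρ)
    {l : ℝ} (hl : l < psi ρ nst) :
    ∃ m : ℕ, alphaSeq ρ m < ρ ∧
      l * ((2 * (nst:ℝ) + 1) * ρ - alphaSeq ρ m + alphaSeq ρ nst)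
        < alphaSeq ρ m + alphaSeq ρ nst - ρ := by
  have hΨ : 0 < psi ρ nst := psi_pos hirr h0 hnst
  set αs := alphaSeq ρ nst with hαs
  have hden : (0:ℝ) < 2 * (nst:ℝ) * ρ + αs := by
    have : (1:ℝ) ≤ (nst:ℝ) := by exact_mod_cast Nat.one_le_iff_ne_zero.2 hnst
    have := alpha_pos hirr hnst
    nlinarith
  set η := (psi ρ nst - l) * (2 * (nst:ℝ) * ρ + αs) with hηdef
  have hη : 0 < η := mul_pos (by linarith) hden
  set ε := η / (2 * (1 + psi ρ nst)) with hεdef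
  have hεpos : 0 < ε := by positivity
  obtain ⟨m, hm0, hmlo, hmhi⟩ := exists_alpha_near hirr h0 h1 hεpos
  refine ⟨m, hmhi, ?_⟩
  set t := alphaSeq ρ m with ht
  have hexact : αs = psi ρ nst * (2 * (nst:ℝ) * ρ + αs) := by
    have hden' : (2 * (nst:ℝ) * ρ + alphaSeq ρ nst) ≠ 0 := ne_of_gt hden
    rw [hαs, psi, div_mul_cancel₀ _ hden']
  -- goal ⟺ η - (ρ - t)(1 + l) > 0
  have hkey : t + αs - ρ - l * ((2 * (nst:ℝ) + 1) * ρ - t + αs)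
      = η - (ρ - t) * (1 + l) := by
    rw [hηdef]
    linear_combination hexact
  have hρt : ρ - t < ε := by linarith
  have hρt0 : 0 ≤ ρ - t := by linarith
  rcases le_or_gt (1 + l) 0 with hcase | hcase
  · have : (ρ - t) * (1 + l) ≤ 0 := mul_nonpos_of_nonneg_of_nonpos hρt0 hcase
    nlinarith
  · have h4 : (ρ - t) * (1 + l) < ε * (1 + psi ρ nst) := by
      have h5 : (1 + l) ≤ 1 + psi ρ nst := by linarith
      calc (ρ - t) * (1 + l) ≤ (ρ - t) * (1 + psi ρ nst) := by
            apply mul_le_mul_of_nonneg_left h5 hρt0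
      _ < ε * (1 + psi ρ nst) := by
            apply mul_lt_mul_of_pos_right hρt (by linarith)
    have h6 : ε * (1 + psi ρ nst) = η / 2 := by
      rw [hεdef]; field_simp
    nlinarith

/-- Only finitely many generators lie far above the antidiagonal line. -/
lemma finite_T {ρ : ℝ} (h0 : 0 < ρ) (h1 : ρ < 1) {δ : ℝ} (hδ : 0 < δ) :
    {p ∈ Gset ρ | δ ≤ p.1 + p.2 - ρ}.Finite := by
  classical
  set B := Nat.ceil (ρ / δ) with hBdef
  apply Set.Finite.subset (Set.Finite.image (fun q : ℕ × ℕ => vecRho ρ q.1 q.2)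
    ((Set.finite_Iic B).prod (Set.finite_Iic B)))
  rintro p ⟨hpG, hpN⟩
  rcases hpG with hp0 | ⟨m, n, hm, hn, rfl⟩
  · exfalso
    simp only [Set.mem_singleton_iff] at hp0
    subst hp0
    simp only [Set.mem_setOf_eq] at hpN
    norm_num at hpN
    linarith
  · refine ⟨(m, n), ⟨?_, ?_⟩, rfl⟩ <;>
    · simp only [Set.mem_Iic]
      have hc := denom_pos m n
      rw [vec_N, le_div_iff₀ hc] at hpN
      have hρδ : ρ / δ ≤ (B : ℝ) := Nat.le_ceil _
      have hm0 := alpha_nonneg ρ m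
      have hn0 := alpha_nonneg ρ n
      have hmB : (m : ℝ) ≤ (B : ℝ) ∧ (n : ℝ) ≤ (B : ℝ) := by
        constructor <;>
        · rw [div_le_iff₀ hδ] at hρδ
          nlinarith [Nat.cast_nonneg (α := ℝ) m, Nat.cast_nonneg (α := ℝ) n]
      first
        | exact_mod_cast hmB.1
        | exact_mod_cast hmB.2

lemma convexJoin_compact {s t : Set (ℝ × ℝ)} (hs : IsCompact s) (ht : IsCompact t) :
    IsCompact (convexJoin ℝ s t) := by
  have heq : convexJoin ℝ s t =
      (fun q : ℝ × (ℝ × ℝ) × (ℝ × ℝ) => (1 - q.1) • q.2.1 + q.1 • q.2.2) ''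
        (Set.Icc (0:ℝ) 1 ×ˢ s ×ˢ t) := by
    ext x
    constructor
    · intro hx
      obtain ⟨a, ha, b, hb, hab⟩ := mem_convexJoin.1 hx
      rw [segment_eq_image] at hab
      obtain ⟨θ, hθ, rfl⟩ := hab
      exact ⟨(θ, a, b), ⟨hθ, ha, hb⟩, rfl⟩
    · rintro ⟨⟨θ, a, b⟩, ⟨hθ, ha, hb⟩, rfl⟩
      apply segment_subset_convexJoin ha hb
      rw [segment_eq_image]
      exact ⟨θ, hθ, rfl⟩
  rw [heq]
  apply IsCompact.image (isCompact_Icc.prod (hs.prod ht))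
  apply Continuous.add
  · exact (continuous_const.sub continuous_fst).smul (continuous_fst.comp continuous_snd)
  · exact continuous_fst.smul ((continuous_snd.comp continuous_snd))

/-- Milman-type lemma: an extreme point strictly above the antidiagonal is a generator. -/
lemma extreme_is_gen {ρ : ℝ} (h0 : 0 < ρ) (h1 : ρ < 1) {v : ℝ × ℝ}
    (hv : v ∈ Set.extremePoints ℝ (LambdaSet ρ)) (hN : 0 < v.1 + v.2 - ρ) :
    v ∈ Sgen ρ := by
  classical
  set δ := (v.1 + v.2 - ρ) / 2 with hδdef
  have hδ : 0 < δ := half_pos hN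
  set T := {p ∈ Gset ρ | δ ≤ p.1 + p.2 - ρ} with hTdef
  have hTfin : T.Finite := finite_T h0 h1 hδ
  set K := LambdaSet ρ ∩ {p : ℝ × ℝ | p.1 + p.2 - ρ ≤ δ} with hKdef
  have hKcl : IsClosed {p : ℝ × ℝ | p.1 + p.2 - ρ ≤ δ} :=
    isClosed_le (by continuity) continuous_const
  have hKcomp : IsCompact K := (lambda_compact h0 h1).inter_right hKcl
  have hhalfconv : Convex ℝ {p : ℝ × ℝ | p.1 + p.2 - ρ ≤ δ} := by
    have h := convex_halfSpace_le (isLinearMap_combo 1 1) (ρ + δ)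
    have heq : {w : ℝ × ℝ | 1 * w.1 + 1 * w.2 ≤ ρ + δ} = {p : ℝ × ℝ | p.1 + p.2 - ρ ≤ δ} := by
      ext q
      simp only [Set.mem_setOf_eq]
      constructor <;> intro <;> linarith
    rwa [heq] at h
  have hKconv : Convex ℝ K := (lambda_convex ρ).inter hhalfconv
  have hK0 : ((0:ℝ), (0:ℝ)) ∈ K := by
    refine ⟨gen_mem_lambda (Or.inl rfl), ?_⟩
    simp only [Set.mem_setOf_eq]
    norm_num
    linarith
  have hTsub : T ⊆ LambdaSet ρ := fun p hp => gen_mem_lambda hp.1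
  have hKsub : K ⊆ LambdaSet ρ := Set.inter_subset_left
  have hGsub : Gset ρ ⊆ T ∪ K := by
    intro g hg
    by_cases hgN : δ ≤ g.1 + g.2 - ρ
    · exact Or.inl ⟨hg, hgN⟩
    · exact Or.inr ⟨gen_mem_lambda hg, le_of_lt (lt_of_not_ge hgN)⟩
  have hconvTsub : convexHull ℝ T ⊆ LambdaSet ρ := convexHull_min hTsub (lambda_convex ρ)
  rcases Set.eq_empty_or_nonempty T with hTemp | hTne
  · exfalso
    have hAclosed : IsClosed K := hKcomp.isClosed
    have hΛA : LambdaSet ρ ⊆ K := by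
      rw [lambda_eq]
      apply closure_minimal _ hAclosed
      apply convexHull_min _ hKconv
      intro g hg
      rcases hGsub hg with h | h
      · rw [hTemp] at h; exact absurd h (Set.notMem_empty g)
      · exact h
    have := (hΛA hv.1).2
    simp only [Set.mem_setOf_eq] at this
    rw [hδdef] at this
    linarith
  · have hAeq : convexHull ℝ (T ∪ K)
        = convexJoin ℝ (convexHull ℝ T) K := by
      rw [convexHull_union hTne ⟨_, hK0⟩, hKconv.convexHull_eq]
    have hAclosed : IsClosed (convexHull ℝ (T ∪ K)) := by
      rw [hAeq]
      exact (convexJoin_compact (hTfin.isCompact_convexHull ℝ) hKcomp).isClosed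
    have hΛA : LambdaSet ρ ⊆ convexHull ℝ (T ∪ K) := by
      rw [lambda_eq]
      apply closure_minimal _ hAclosed
      apply convexHull_min _ (convex_convexHull ℝ _)
      exact hGsub.trans (subset_convexHull ℝ _)
    have hvA : v ∈ convexJoin ℝ (convexHull ℝ T) K := by
      rw [← hAeq]; exact hΛA hv.1
    obtain ⟨a, ha, b, hb, hab⟩ := mem_convexJoin.1 hvA
    have haΛ : a ∈ LambdaSet ρ := hconvTsub ha
    have hbΛ : b ∈ LambdaSet ρ := hKsub hb
    have hbN : b.1 + b.2 - ρ ≤ δ := hb.2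
    rw [segment_eq_image] at hab
    obtain ⟨θ, hθ, hvab⟩ := hab
    replace hvab : (1 - θ) • a + θ • b = v := hvab
    have hvb_ne : v ≠ b := by
      intro h
      rw [h] at hN
      rw [hδdef, h] at hbN
      linarith
    have hva : v ∈ convexHull ℝ T := by
      rcases eq_or_lt_of_le hθ.1 with h0' | h0'
      · rw [← h0'] at hvab
        norm_num at hvab
        exact hvab ▸ ha
      · rcases eq_or_lt_of_le hθ.2 with h1' | h1'
        · exfalso
          rw [h1'] at hvab
          norm_num at hvab
          exact hvb_ne hvab.symm
        · by_cases hab' : a = b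
          · exfalso
            rw [hab'] at hvab
            have : v = b := by
              rw [← hvab, ← add_smul]
              norm_num
            exact hvb_ne this
          · have hopen : v ∈ openSegment ℝ a b := by
              rw [openSegment_eq_image]
              exact ⟨θ, ⟨h0', h1'⟩, hvab⟩
            obtain ⟨hav, hbv⟩ := (mem_extremePoints.1 hv).2 _ haΛ _ hbΛ hopen
            exact absurd hbv.symm hvb_ne
    have hvT : v ∈ Set.extremePoints ℝ (convexHull ℝ T) := by
      rw [mem_extremePoints]
      exact ⟨hva, fun x₁ hx₁ x₂ hx₂ hseg =>
        (mem_extremePoints.1 hv).2 _ (hconvTsub hx₁) _ (hconvTsub hx₂) hseg⟩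
    have hvT' : v ∈ T := extremePoints_convexHull_subset hvT
    rcases hvT'.1 with h00 | hS
    · exfalso
      simp only [Set.mem_singleton_iff] at h00
      rw [h00] at hN
      norm_num at hN
      linarith
    · exact hS

end Stmt3Aux

theorem stmt3 (ρ : ℝ) (hirr : Irrational ρ) (h0 : 0 < ρ) (h1 : ρ < 1) :
    (Set.extremePoints ℝ (LambdaSet ρ)).Infinite := by
  classical
  by_contra hcon
  rw [Set.not_infinite] at hcon
  have hΛcomp := Stmt3Aux.lambda_compact h0 h1
  have hΛconv := Stmt3Aux.lambda_convex ρ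
  have hKM := closure_convexHull_extremePoints hΛcomp hΛconv
  have hΛE : convexHull ℝ (Set.extremePoints ℝ (LambdaSet ρ)) = LambdaSet ρ :=
    ((hcon.isClosed_convexHull ℝ).closure_eq).symm.trans hKM
  obtain ⟨nst, hnst0, hnstadm, hmax⟩ := Stmt3Aux.exists_psi_max hirr h0 h1
  have hΨpos : 0 < Stmt3Aux.psi ρ nst := Stmt3Aux.psi_pos hirr h0 hnst0
  have hzeroΛ : ((0:ℝ), (0:ℝ)) ∈ LambdaSet ρ := Stmt3Aux.gen_mem_lambda (Or.inl rfl)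
  have hx := Stmt3Aux.lambda_x_le h0
  have hy := Stmt3Aux.lambda_y_nonneg h0
  set E' := hcon.toFinset.filter (fun v : ℝ × ℝ => 0 < ρ - v.1 + v.2) with hE'def
  have hE'ne : E'.Nonempty := by
    by_contra hne
    rw [Finset.not_nonempty_iff_eq_empty] at hne
    have hsub : Set.extremePoints ℝ (LambdaSet ρ) ⊆ {p : ℝ × ℝ | ρ - p.1 + p.2 ≤ 0} := by
      intro v hvE
      by_contra hvD
      simp only [Set.mem_setOf_eq] at hvD
      have hmem : v ∈ E' := by
        rw [hE'def, Finset.mem_filter]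
        exact ⟨hcon.mem_toFinset.2 hvE, lt_of_not_ge hvD⟩
      rw [hne] at hmem
      exact absurd hmem (Finset.notMem_empty v)
    have hconv' : Convex ℝ {p : ℝ × ℝ | ρ - p.1 + p.2 ≤ 0} := by
      have h := convex_halfSpace_le (Stmt3Aux.isLinearMap_combo (-1) 1) (-ρ)
      have heq : {w : ℝ × ℝ | (-1) * w.1 + 1 * w.2 ≤ -ρ}
          = {p : ℝ × ℝ | ρ - p.1 + p.2 ≤ 0} := by
        ext q
        simp only [Set.mem_setOf_eq]
        constructor <;> intro <;> linarith
      rwa [heq] at h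
    have hmem0 : ((0:ℝ), (0:ℝ)) ∈ convexHull ℝ (Set.extremePoints ℝ (LambdaSet ρ)) := by
      rw [hΛE]; exact hzeroΛ
    have h00 := convexHull_min hsub hconv' hmem0
    simp only [Set.mem_setOf_eq] at h00
    norm_num at h00
    linarith
  obtain ⟨vh, hvhE', hvhmax⟩ := E'.exists_max_image
    (fun v : ℝ × ℝ => (v.1 + v.2 - ρ) / (ρ - v.1 + v.2)) hE'ne
  rw [hE'def, Finset.mem_filter] at hvhE'
  have hvhE : vh ∈ Set.extremePoints ℝ (LambdaSet ρ) := hcon.mem_toFinset.1 hvhE'.1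
  have hvhD : 0 < ρ - vh.1 + vh.2 := hvhE'.2
  set lam := (vh.1 + vh.2 - ρ) / (ρ - vh.1 + vh.2) with hlamdef
  have hEbound : ∀ v ∈ Set.extremePoints ℝ (LambdaSet ρ),
      v.1 + v.2 - ρ ≤ lam * (ρ - v.1 + v.2) := by
    intro v hvE
    have hvΛ : v ∈ LambdaSet ρ := hvE.1
    have hDnn : 0 ≤ ρ - v.1 + v.2 := by
      have h1' := hx v hvΛ
      have h2' := hy v hvΛ
      linarith
    rcases eq_or_lt_of_le hDnn with hD0 | hDpos
    · have h1' := hx v hvΛ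
      have h2' := hy v hvΛ
      have hv2 : v.2 = 0 := by linarith
      have hv1 : v.1 = ρ := by linarith
      rw [hv1, hv2]
      norm_num
    · have hmem : v ∈ E' := by
        rw [hE'def, Finset.mem_filter]
        exact ⟨hcon.mem_toFinset.2 hvE, hDpos⟩
      have hle := hvhmax v hmem
      calc v.1 + v.2 - ρ = ((v.1 + v.2 - ρ) / (ρ - v.1 + v.2)) * (ρ - v.1 + v.2) := by
            field_simp
      _ ≤ lam * (ρ - v.1 + v.2) := mul_le_mul_of_nonneg_right hle hDpos.le
  have hΛbound : ∀ p ∈ LambdaSet ρ, p.1 + p.2 - ρ ≤ lam * (ρ - p.1 + p.2) := by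
    intro p hp
    have hconv' : Convex ℝ {q : ℝ × ℝ | (1 + lam) * q.1 + (1 - lam) * q.2 ≤ (1 + lam) * ρ} :=
      convex_halfSpace_le (Stmt3Aux.isLinearMap_combo (1 + lam) (1 - lam)) ((1 + lam) * ρ)
    have hsub : convexHull ℝ (Set.extremePoints ℝ (LambdaSet ρ))
        ⊆ {q : ℝ × ℝ | (1 + lam) * q.1 + (1 - lam) * q.2 ≤ (1 + lam) * ρ} := by
      apply convexHull_min _ hconv'
      intro v hvE
      have := hEbound v hvE
      simp only [Set.mem_setOf_eq]
      nlinarith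
    have hpmem : p ∈ convexHull ℝ (Set.extremePoints ℝ (LambdaSet ρ)) := by
      rw [hΛE]; exact hp
    have := hsub hpmem
    simp only [Set.mem_setOf_eq] at this
    nlinarith
  have hlamΨ : Stmt3Aux.psi ρ nst ≤ lam := by
    by_contra hlt
    push_neg at hlt
    obtain ⟨m, hmadm, hstrict⟩ := Stmt3Aux.approx_ineq hirr h0 h1 hnst0 hnstadm hlt
    have hpΛ : vecRho ρ m nst ∈ LambdaSet ρ :=
      Stmt3Aux.gen_mem_lambda (Or.inr ⟨m, nst, hmadm, hnstadm, rfl⟩)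
    have hb := hΛbound _ hpΛ
    rw [Stmt3Aux.vec_N, Stmt3Aux.vec_D] at hb
    have hc := Stmt3Aux.denom_pos m nst
    have hA : alphaSeq ρ m + alphaSeq ρ nst - ρ
        ≤ lam * ((2 * (nst:ℝ) + 1) * ρ - alphaSeq ρ m + alphaSeq ρ nst) := by
      have h2 := mul_le_mul_of_nonneg_right hb hc.le
      rw [div_mul_cancel₀ _ (ne_of_gt hc)] at h2
      calc alphaSeq ρ m + alphaSeq ρ nst - ρ
          ≤ lam * (((2 * (nst:ℝ) + 1) * ρ - alphaSeq ρ m + alphaSeq ρ nst)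
            / ((m:ℝ) + (nst:ℝ) + 1)) * ((m:ℝ) + (nst:ℝ) + 1) := h2
      _ = lam * ((2 * (nst:ℝ) + 1) * ρ - alphaSeq ρ m + alphaSeq ρ nst) := by
            field_simp
    linarith
  have hNvh : vh.1 + vh.2 - ρ = lam * (ρ - vh.1 + vh.2) := by
    rw [hlamdef]
    field_simp
  have hNpos : 0 < vh.1 + vh.2 - ρ := by
    rw [hNvh]
    exact mul_pos (lt_of_lt_of_le hΨpos hlamΨ) hvhD
  obtain ⟨m, n, hm, hn, hveq⟩ := Stmt3Aux.extreme_is_gen h0 h1 hvhE hNpos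
  have hkey := Stmt3Aux.key_ineq hirr h0 h1 hnst0 hnstadm hmax hm hn
  have hc := Stmt3Aux.denom_pos m n
  have hN' : vh.1 + vh.2 - ρ
      = (alphaSeq ρ m + alphaSeq ρ n - ρ) / ((m:ℝ) + (n:ℝ) + 1) := by
    rw [hveq]; exact Stmt3Aux.vec_N ρ m n
  have hD' : ρ - vh.1 + vh.2
      = ((2 * (n:ℝ) + 1) * ρ - alphaSeq ρ m + alphaSeq ρ n) / ((m:ℝ) + (n:ℝ) + 1) := by
    rw [hveq]; exact Stmt3Aux.vec_D ρ m n
  have hfinal : vh.1 + vh.2 - ρ < Stmt3Aux.psi ρ nst * (ρ - vh.1 + vh.2) := by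
    rw [hN', hD', ← mul_div_assoc]
    exact (div_lt_div_iff_of_pos_right hc).2 hkey
  have hfinal2 : Stmt3Aux.psi ρ nst * (ρ - vh.1 + vh.2) ≤ lam * (ρ - vh.1 + vh.2) :=
    mul_le_mul_of_nonneg_right hlamΨ hvhD.le
  linarith [hfinal, hfinal2, hNvh]
end

section
/- For every irrational ρ ∈ (0,1) there exist sequences (m_k) and (n_k) of natural numbers with m_k ≥ 1, α_{m_k} < ρ and α_{n_k} < ρ for all k, such that ⌈m_k ρ⌉/(m_k + n_k + 1) → 0 and the vectors ρ_{m_k,n_k} converge to (0, ρ) as k → ∞. -/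
open Filter Topology

lemma ceil_grows (ρ : ℝ) (h0 : 0 < ρ) (k : ℕ) :
    ∃ n : ℕ, k ≤ n ∧ ⌈(n : ℝ) * ρ⌉ < ⌈((n : ℝ) + 1) * ρ⌉ := by
  by_contra h
  push_neg at h
  have mono : ∀ d : ℕ, ⌈((k + d : ℕ) : ℝ) * ρ⌉ ≤ ⌈(k : ℝ) * ρ⌉ := by
    intro d
    induction d with
    | zero => simp
    | succ d ih =>
      have h' := h (k + d) (Nat.le_add_right _ _)
      have e : ((k + (d + 1) : ℕ) : ℝ) * ρ = (((k + d : ℕ) : ℝ) + 1) * ρ := by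
        push_cast; ring
      calc ⌈((k + (d + 1) : ℕ) : ℝ) * ρ⌉ = ⌈(((k + d : ℕ) : ℝ) + 1) * ρ⌉ := by rw [e]
        _ ≤ ⌈((k + d : ℕ) : ℝ) * ρ⌉ := h'
        _ ≤ _ := ih
  obtain ⟨N, hN⟩ := exists_nat_gt ((⌈(k : ℝ) * ρ⌉ : ℝ) / ρ)
  have hN' : (⌈(k : ℝ) * ρ⌉ : ℝ) < (N : ℝ) * ρ := by
    rw [div_lt_iff₀ h0] at hN; linarith
  have h2 := mono N
  have h3 : (((k + N : ℕ) : ℝ)) * ρ ≤ (⌈((k + N : ℕ) : ℝ) * ρ⌉ : ℝ) := Int.le_ceil _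
  have h4 : (⌈((k + N : ℕ) : ℝ) * ρ⌉ : ℝ) ≤ (⌈(k : ℝ) * ρ⌉ : ℝ) := by exact_mod_cast h2
  have h5 : (N : ℝ) * ρ ≤ ((k + N : ℕ) : ℝ) * ρ := by
    push_cast
    have : (0:ℝ) ≤ (k : ℝ) := Nat.cast_nonneg k
    nlinarith
  linarith

lemma alpha_lt (ρ : ℝ) (n : ℕ) (h : ⌈(n : ℝ) * ρ⌉ < ⌈((n : ℝ) + 1) * ρ⌉) :
    alphaSeq ρ n < ρ := by
  have hlt : (⌈(n : ℝ) * ρ⌉ : ℝ) < ((n : ℝ) + 1) * ρ := by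
    by_contra hc
    push_neg at hc
    have : ⌈((n : ℝ) + 1) * ρ⌉ ≤ ⌈(n : ℝ) * ρ⌉ := Int.ceil_le.mpr hc
    omega
  unfold alphaSeq
  nlinarith

theorem stmt6 (ρ : ℝ) (hirr : Irrational ρ) (h0 : 0 < ρ) (h1 : ρ < 1) :
    ∃ m n : ℕ → ℕ,
      (∀ k, 1 ≤ m k ∧ alphaSeq ρ (m k) < ρ ∧ alphaSeq ρ (n k) < ρ) ∧
      Tendsto (fun k => (⌈(m k : ℝ) * ρ⌉ : ℝ) / ((m k : ℝ) + (n k : ℝ) + 1))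
        atTop (𝓝 0) ∧
      Tendsto (fun k => vecRho ρ (m k) (n k)) atTop (𝓝 ((0 : ℝ), ρ)) := by
  obtain ⟨m₀, hm₀ge, hm₀⟩ := ceil_grows ρ h0 1
  set n : ℕ → ℕ := fun k => (ceil_grows ρ h0 k).choose with hn_def
  have hn : ∀ k, k ≤ n k ∧ ⌈((n k : ℕ) : ℝ) * ρ⌉ < ⌈(((n k : ℕ) : ℝ)) * ρ + ρ⌉ := by
    intro k
    obtain ⟨h1', h2'⟩ := (ceil_grows ρ h0 k).choose_spec
    refine ⟨h1', ?_⟩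
    have : ((n k : ℕ) : ℝ) * ρ + ρ = (((n k : ℕ) : ℝ) + 1) * ρ := by ring
    rw [this]
    exact h2'
  refine ⟨fun _ => m₀, n, ?_, ?_, ?_⟩
  · intro k
    refine ⟨hm₀ge, alpha_lt ρ m₀ hm₀, alpha_lt ρ (n k) ?_⟩
    have := (hn k).2
    have e : ((n k : ℕ) : ℝ) * ρ + ρ = (((n k : ℕ) : ℝ) + 1) * ρ := by ring
    rwa [e] at this
  all_goals {
    have hnk : ∀ k : ℕ, (k : ℝ) ≤ ((n k : ℕ) : ℝ) := fun k => by exact_mod_cast (hn k).1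
    have htop : Tendsto (fun k => ((n k : ℕ) : ℝ)) atTop atTop :=
      tendsto_atTop_mono hnk tendsto_natCast_atTop_atTop
    have hD : Tendsto (fun k => (m₀ : ℝ) + ((n k : ℕ) : ℝ) + 1) atTop atTop := by
      have := htop.atTop_add (tendsto_const_nhds (x := (1:ℝ)))
      have h2 := (tendsto_const_nhds (x := (m₀:ℝ))).add_atTop this
      simpa [add_assoc] using h2
    have hg : Tendsto (fun k => ((m₀ : ℝ) + ((n k : ℕ) : ℝ) + 1)⁻¹) atTop (𝓝 0) :=
      tendsto_inv_atTop_zero.comp hD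
    have hfirst : Tendsto (fun k => (⌈(m₀ : ℝ) * ρ⌉ : ℝ) / ((m₀ : ℝ) + ((n k : ℕ) : ℝ) + 1))
        atTop (𝓝 0) := by
      have := hg.const_mul ((⌈(m₀ : ℝ) * ρ⌉ : ℝ))
      simpa [div_eq_mul_inv] using this
    have hsecond : Tendsto (fun k => (⌈((n k : ℕ) : ℝ) * ρ⌉ : ℝ) / ((m₀ : ℝ) + ((n k : ℕ) : ℝ) + 1))
        atTop (𝓝 ρ) := by
      rw [← tendsto_sub_nhds_zero_iff]
      have hbound : ∀ k, ‖(⌈((n k : ℕ) : ℝ) * ρ⌉ : ℝ) / ((m₀ : ℝ) + ((n k : ℕ) : ℝ) + 1) - ρ‖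
          ≤ ((m₀ : ℝ) + 2) * ((m₀ : ℝ) + ((n k : ℕ) : ℝ) + 1)⁻¹ := by
        intro k
        set N := ((n k : ℕ) : ℝ) with hN
        have hNpos : (0:ℝ) ≤ N := Nat.cast_nonneg _
        have hm0 : (0:ℝ) ≤ (m₀ : ℝ) := Nat.cast_nonneg _
        have hDpos : (0:ℝ) < (m₀ : ℝ) + N + 1 := by linarith
        have hceil1 : N * ρ ≤ (⌈N * ρ⌉ : ℝ) := Int.le_ceil _
        have hceil2 : (⌈N * ρ⌉ : ℝ) < N * ρ + 1 := Int.ceil_lt_add_one _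
        rw [Real.norm_eq_abs, abs_le]
        have he : (⌈N * ρ⌉ : ℝ) / ((m₀ : ℝ) + N + 1) - ρ
            = ((⌈N * ρ⌉ : ℝ) - ρ * ((m₀ : ℝ) + N + 1)) / ((m₀ : ℝ) + N + 1) := by
          field_simp
        rw [he]
        constructor
        · rw [le_div_iff₀ hDpos]
          have : -((m₀:ℝ) + 2) * ((m₀:ℝ) + N + 1) * ((m₀:ℝ) + N + 1)⁻¹ = -((m₀:ℝ) + 2) := by
            field_simp
          nlinarith [mul_pos hDpos (show (0:ℝ) < ((m₀:ℝ)+N+1)⁻¹ from inv_pos.mpr hDpos)]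
        · rw [div_le_iff₀ hDpos]
          have hinv : ((m₀:ℝ) + N + 1)⁻¹ * ((m₀:ℝ) + N + 1) = 1 := by
            field_simp
          nlinarith
      have hlim : Tendsto (fun k => ((m₀ : ℝ) + 2) * ((m₀ : ℝ) + ((n k : ℕ) : ℝ) + 1)⁻¹)
          atTop (𝓝 0) := by
        have := hg.const_mul ((m₀ : ℝ) + 2)
        simpa using this
      exact squeeze_zero_norm hbound hlim
    first
    | exact hfirst
    | { unfold vecRho
        exact hfirst.prodMk_nhds hsecond }
  }
end

section
/- Let Y be a compact metric space and let f : Y → Y be a near-homeomorphism, i.e. a continuous map that is the uniform limit of a sequence of homeomorphisms f_n : Y → Y. Then f is a factor of a homeomorphism of Y: there exist a homeomorphism f̂ : Y → Y and a continuous surjection h : Y → Y such that h ∘ f̂ = f ∘ h. -/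
set_option linter.unusedSectionVars false

open Filter Topology

namespace Stmt10Aux

variable {Y : Type*} [MetricSpace Y] [CompactSpace Y]

lemma exists_mod (φ : Y → Y) (hφ : Continuous φ) {e : ℝ} (he : 0 < e) :
    ∃ δ : ℝ, 0 < δ ∧ ∀ a b : Y, dist a b ≤ δ → dist (φ a) (φ b) ≤ e := by
  have h := CompactSpace.uniformContinuous_of_continuous hφ
  rw [Metric.uniformContinuous_iff] at h
  obtain ⟨δ, hδ, H⟩ := h e he
  exact ⟨δ/2, by positivity, fun a b hab =>
    le_of_lt (H (lt_of_le_of_lt hab (by linarith)))⟩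

open Classical in
noncomputable def mod (φ : Y → Y) (e : ℝ) : ℝ :=
  if h : 0 < e ∧ Continuous φ then (exists_mod φ h.2 h.1).choose else 1

lemma mod_pos (φ : Y → Y) (e : ℝ) (he : 0 < e) (hφ : Continuous φ) :
    0 < mod φ e := by
  unfold mod; rw [dif_pos ⟨he, hφ⟩]
  exact (exists_mod φ hφ he).choose_spec.1

lemma mod_spec {φ : Y → Y} {e : ℝ} (he : 0 < e) (hφ : Continuous φ)
    {a b : Y} (hab : dist a b ≤ mod φ e) : dist (φ a) (φ b) ≤ e := by
  unfold mod at hab; rw [dif_pos ⟨he, hφ⟩] at hab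
  exact (exists_mod φ hφ he).choose_spec.2 a b hab

lemma surj_of_tendsto {φn : ℕ → C(Y, Y)} {φ : C(Y, Y)}
    (h : Tendsto φn atTop (𝓝 φ)) (hs : ∀ n, Function.Surjective (φn n)) :
    Function.Surjective φ := by
  intro y
  have hy : y ∈ closure (Set.range (φ : Y → Y)) := by
    rw [Metric.mem_closure_iff]
    intro ε hε
    have : ∀ᶠ n in atTop, dist (φn n) φ < ε := by
      have := Metric.tendsto_nhds.mp h ε hε
      exact this
    obtain ⟨n, hn⟩ := this.exists
    obtain ⟨x, hx⟩ := hs n y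
    refine ⟨φ x, Set.mem_range_self x, ?_⟩
    calc dist y (φ x) = dist (φn n x) (φ x) := by rw [hx]
    _ ≤ dist (φn n) φ := ContinuousMap.dist_apply_le_dist x
    _ < ε := hn
  rwa [(isCompact_range φ.continuous).isClosed.closure_eq] at hy


section Construction

variable (f : Y → Y) (fs : ℕ → Y ≃ₜ Y)
  (hconv : TendstoUniformly (fun n x => fs n x) f atTop)

include hconv

lemma exists_pick {e : ℝ} (he : 0 < e) :
    ∃ k : ℕ, ∀ x, dist (fs k x) (f x) ≤ e := by
  have h := Metric.tendstoUniformly_iff.mp hconv e he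
  obtain ⟨k, hk⟩ := h.exists
  exact ⟨k, fun x => le_of_lt (by rw [dist_comm]; exact hk x)⟩

open Classical in
noncomputable def pick (e : ℝ) : ℕ :=
  if h : 0 < e then (exists_pick f fs hconv h).choose else 0

lemma pick_spec {e : ℝ} (he : 0 < e) (x : Y) :
    dist (fs (pick f fs hconv e) x) (f x) ≤ e := by
  unfold pick; rw [dif_pos he]
  exact (exists_pick f fs hconv he).choose_spec x

/-- modulus for `H` at level `(1/2)^n` -/
noncomputable def δf (H : Y ≃ₜ Y) (n : ℕ) : ℝ := mod (H : Y → Y) ((1/2 : ℝ)^n)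

noncomputable def γf (H : Y ≃ₜ Y) (dp : ℝ) (n : ℕ) : ℝ :=
  mod (H.symm : Y → Y) (min ((1/2 : ℝ)^n) (dp/2))

noncomputable def Bf (H : Y ≃ₜ Y) (Bp dp : ℝ) (n : ℕ) : ℝ :=
  min (γf H dp n / 4) (Bp/2)

noncomputable def ηf (H : Y ≃ₜ Y) (Bp dp : ℝ) (n : ℕ) : ℝ :=
  mod (H : Y → Y) (Bf H Bp dp n)

noncomputable def ζf (H : Y ≃ₜ Y) (Bp dp : ℝ) (n : ℕ) : ℝ :=
  mod f (ηf H Bp dp n / 2)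

noncomputable def κf (n : ℕ) : ℝ := mod (f^[n]) ((1/2 : ℝ)^n)

noncomputable def εf (H : Y ≃ₜ Y) (Bp dp : ℝ) (n : ℕ) : ℝ :=
  min (min (ηf H Bp dp n / 2) (ζf f H Bp dp n)) (min (δf H n / 4) (κf f n))

noncomputable def S : ℕ → (Y ≃ₜ Y) × ℝ × ℝ
  | 0 => (Homeomorph.refl Y, 1, 1)
  | n+1 =>
    let s := S n
    ((fs (pick f fs hconv (εf f s.1 s.2.1 s.2.2 n))).trans s.1,
      Bf s.1 s.2.1 s.2.2 n, δf s.1 n)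

noncomputable def Hs (n : ℕ) : Y ≃ₜ Y := (S f fs hconv n).1
noncomputable def Bp (n : ℕ) : ℝ := (S f fs hconv n).2.1
noncomputable def dp (n : ℕ) : ℝ := (S f fs hconv n).2.2
noncomputable def δs (n : ℕ) : ℝ := δf (Hs f fs hconv n) n
noncomputable def γs (n : ℕ) : ℝ := γf (Hs f fs hconv n) (dp f fs hconv n) n
noncomputable def Bs (n : ℕ) : ℝ :=
  Bf (Hs f fs hconv n) (Bp f fs hconv n) (dp f fs hconv n) n
noncomputable def ηs (n : ℕ) : ℝ :=
  ηf (Hs f fs hconv n) (Bp f fs hconv n) (dp f fs hconv n) n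
noncomputable def ζs (n : ℕ) : ℝ :=
  ζf f (Hs f fs hconv n) (Bp f fs hconv n) (dp f fs hconv n) n
noncomputable def εs (n : ℕ) : ℝ :=
  εf f (Hs f fs hconv n) (Bp f fs hconv n) (dp f fs hconv n) n
noncomputable def g (n : ℕ) : Y ≃ₜ Y := fs (pick f fs hconv (εs f fs hconv n))

lemma Hs_succ (n : ℕ) :
    Hs f fs hconv (n+1) = (g f fs hconv n).trans (Hs f fs hconv n) := rfl

lemma Bp_succ (n : ℕ) : Bp f fs hconv (n+1) = Bs f fs hconv n := rfl

lemma dp_succ (n : ℕ) : dp f fs hconv (n+1) = δs f fs hconv n := rfl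

lemma Hs_zero : Hs f fs hconv 0 = Homeomorph.refl Y := rfl
lemma Bp_zero : Bp f fs hconv 0 = 1 := rfl
lemma dp_zero : dp f fs hconv 0 = 1 := rfl


lemma δs_def (n : ℕ) :
    δs f fs hconv n = mod (Hs f fs hconv n : Y → Y) ((1/2 : ℝ)^n) := rfl
lemma γs_def (n : ℕ) :
    γs f fs hconv n = mod ((Hs f fs hconv n).symm : Y → Y)
      (min ((1/2 : ℝ)^n) (dp f fs hconv n / 2)) := rfl
lemma Bs_def (n : ℕ) :
    Bs f fs hconv n = min (γs f fs hconv n / 4) (Bp f fs hconv n / 2) := rfl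
lemma ηs_def (n : ℕ) :
    ηs f fs hconv n = mod (Hs f fs hconv n : Y → Y) (Bs f fs hconv n) := rfl
lemma ζs_def (n : ℕ) : ζs f fs hconv n = mod f (ηs f fs hconv n / 2) := rfl
lemma εs_def (n : ℕ) :
    εs f fs hconv n = min (min (ηs f fs hconv n / 2) (ζs f fs hconv n))
      (min (δs f fs hconv n / 4) (κf f n)) := rfl

lemma pos_all : ∀ n, 0 < dp f fs hconv n ∧ 0 < Bp f fs hconv n := by
  intro n
  induction n with
  | zero => exact ⟨one_pos, one_pos⟩
  | succ n ih =>
    have hγ : 0 < γs f fs hconv n := by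
      rw [γs_def]
      exact mod_pos _ _ (lt_min (by positivity) (by linarith [ih.1]))
        (Hs f fs hconv n).symm.continuous
    constructor
    · rw [dp_succ, δs_def]
      exact mod_pos _ _ (by positivity) (Hs f fs hconv n).continuous
    · rw [Bp_succ, Bs_def]
      exact lt_min (by linarith) (by linarith [ih.2])

lemma dp_pos (n : ℕ) : 0 < dp f fs hconv n := (pos_all f fs hconv n).1
lemma Bp_pos (n : ℕ) : 0 < Bp f fs hconv n := (pos_all f fs hconv n).2

lemma δs_pos (n : ℕ) : 0 < δs f fs hconv n := by
  rw [δs_def]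
  exact mod_pos _ _ (by positivity) (Hs f fs hconv n).continuous

lemma γs_pos (n : ℕ) : 0 < γs f fs hconv n := by
  rw [γs_def]
  exact mod_pos _ _ (lt_min (by positivity) (by linarith [dp_pos f fs hconv n]))
    (Hs f fs hconv n).symm.continuous

lemma Bs_pos (n : ℕ) : 0 < Bs f fs hconv n := by
  rw [Bs_def]
  exact lt_min (by linarith [γs_pos f fs hconv n]) (by linarith [Bp_pos f fs hconv n])

lemma ηs_pos (n : ℕ) : 0 < ηs f fs hconv n := by
  rw [ηs_def]
  exact mod_pos _ _ (Bs_pos f fs hconv n) (Hs f fs hconv n).continuous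

lemma εs_le_η2 (n : ℕ) : εs f fs hconv n ≤ ηs f fs hconv n / 2 := by
  rw [εs_def]; exact le_trans (min_le_left _ _) (min_le_left _ _)

lemma εs_le_ζ (n : ℕ) : εs f fs hconv n ≤ ζs f fs hconv n := by
  rw [εs_def]; exact le_trans (min_le_left _ _) (min_le_right _ _)

lemma εs_le_δ4 (n : ℕ) : εs f fs hconv n ≤ δs f fs hconv n / 4 := by
  rw [εs_def]; exact le_trans (min_le_right _ _) (min_le_left _ _)

lemma εs_le_κ (n : ℕ) : εs f fs hconv n ≤ κf f n := by
  rw [εs_def]; exact le_trans (min_le_right _ _) (min_le_right _ _)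

lemma Bs_le_γ4 (n : ℕ) : Bs f fs hconv n ≤ γs f fs hconv n / 4 := by
  rw [Bs_def]; exact min_le_left _ _

lemma Bs_succ_le (n : ℕ) : Bs f fs hconv (n+1) ≤ Bs f fs hconv n / 2 := by
  have : Bs f fs hconv (n+1) ≤ Bp f fs hconv (n+1) / 2 := by
    rw [Bs_def]; exact min_le_right _ _
  rwa [Bp_succ] at this

lemma Bs_le_geom (n : ℕ) : Bs f fs hconv n ≤ Bs f fs hconv 0 * (1/2)^n := by
  induction n with
  | zero => simp
  | succ n ih =>
    calc Bs f fs hconv (n+1) ≤ Bs f fs hconv n / 2 := Bs_succ_le f fs hconv n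
    _ ≤ (Bs f fs hconv 0 * (1/2)^n) / 2 := by linarith
    _ = Bs f fs hconv 0 * (1/2)^(n+1) := by ring

/-- the conjugated homeomorphism approximants -/
noncomputable def Fc (n : ℕ) : C(Y, Y) :=
  ⟨fun x => Hs f fs hconv n (g f fs hconv n ((Hs f fs hconv n).symm x)),
    (Hs f fs hconv n).continuous.comp ((g f fs hconv n).continuous.comp
      (Hs f fs hconv n).symm.continuous)⟩

lemma symm_succ (n : ℕ) (x : Y) :
    (Hs f fs hconv (n+1)).symm x
      = (g f fs hconv n).symm ((Hs f fs hconv n).symm x) := by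
  rw [Hs_succ]; rfl

variable (hf : Continuous f)
include hf

lemma ζs_pos (n : ℕ) : 0 < ζs f fs hconv n := by
  rw [ζs_def]
  exact mod_pos _ _ (by linarith [ηs_pos f fs hconv n]) hf

lemma κs_pos (n : ℕ) : 0 < κf f n :=
  mod_pos _ _ (by positivity) (hf.iterate n)

lemma εs_pos (n : ℕ) : 0 < εs f fs hconv n := by
  rw [εs_def]
  refine lt_min (lt_min ?_ ?_) (lt_min ?_ ?_)
  · linarith [ηs_pos f fs hconv n]
  · exact ζs_pos f fs hconv hf n
  · linarith [δs_pos f fs hconv n]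
  · exact κs_pos f fs hconv hf n

lemma hg (n : ℕ) (x : Y) : dist (g f fs hconv n x) (f x) ≤ εs f fs hconv n :=
  pick_spec f fs hconv (εs_pos f fs hconv hf n) x

noncomputable def Gc (n : ℕ) : C(Y, Y) :=
  ⟨fun x => Hs f fs hconv n (f ((Hs f fs hconv n).symm x)),
    (Hs f fs hconv n).continuous.comp (hf.comp (Hs f fs hconv n).symm.continuous)⟩

noncomputable def hc (n : ℕ) : C(Y, Y) :=
  ⟨fun x => f^[n] ((Hs f fs hconv n).symm x),
    (hf.iterate n).comp (Hs f fs hconv n).symm.continuous⟩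

lemma dist_hc (n : ℕ) :
    dist (hc f fs hconv hf (n+1)) (hc f fs hconv hf n) ≤ (1/2)^n := by
  rw [ContinuousMap.dist_le (by positivity)]
  intro x
  set u := (g f fs hconv n).symm ((Hs f fs hconv n).symm x) with hu
  have h1 : hc f fs hconv hf (n+1) x = f^[n] (f u) := by
    show f^[n+1] ((Hs f fs hconv (n+1)).symm x) = _
    rw [symm_succ, Function.iterate_succ_apply]
  have h2 : hc f fs hconv hf n x = f^[n] (g f fs hconv n u) := by
    show f^[n] ((Hs f fs hconv n).symm x) = _
    rw [hu, Homeomorph.apply_symm_apply]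
  rw [h1, h2]
  have hκ : dist (f u) (g f fs hconv n u) ≤ κf f n := by
    rw [dist_comm]
    exact le_trans (hg f fs hconv hf n u) (εs_le_κ f fs hconv n)
  rw [show κf f n = mod (f^[n]) ((1/2 : ℝ)^n) from rfl] at hκ
  exact mod_spec (by positivity) (hf.iterate n) hκ

lemma dist_Fc_Gc (n : ℕ) :
    dist (Fc f fs hconv n) (Gc f fs hconv hf n) ≤ Bs f fs hconv n := by
  rw [ContinuousMap.dist_le (le_of_lt (Bs_pos f fs hconv n))]
  intro x
  refine mod_spec (Bs_pos f fs hconv n) (Hs f fs hconv n).continuous ?_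
  rw [← ηs_def]
  exact le_trans (hg f fs hconv hf n _) (le_trans (εs_le_η2 f fs hconv n)
    (by linarith [ηs_pos f fs hconv n]))

lemma dist_Gc_succ (n : ℕ) :
    dist (Gc f fs hconv hf (n+1)) (Gc f fs hconv hf n) ≤ Bs f fs hconv n := by
  rw [ContinuousMap.dist_le (le_of_lt (Bs_pos f fs hconv n))]
  intro x
  set v := (g f fs hconv n).symm ((Hs f fs hconv n).symm x) with hv
  have h1 : Gc f fs hconv hf (n+1) x
      = Hs f fs hconv n (g f fs hconv n (f v)) := by
    show Hs f fs hconv (n+1) (f ((Hs f fs hconv (n+1)).symm x)) = _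
    rw [symm_succ, Hs_succ]; rfl
  have h2 : Gc f fs hconv hf n x
      = Hs f fs hconv n (f (g f fs hconv n v)) := by
    show Hs f fs hconv n (f ((Hs f fs hconv n).symm x)) = _
    rw [hv, Homeomorph.apply_symm_apply]
  rw [h1, h2]
  refine mod_spec (Bs_pos f fs hconv n) (Hs f fs hconv n).continuous ?_
  rw [← ηs_def]
  have d1 : dist (g f fs hconv n (f v)) (f (f v)) ≤ εs f fs hconv n :=
    hg f fs hconv hf n (f v)
  have d2 : dist (f (f v)) (f (g f fs hconv n v)) ≤ ηs f fs hconv n / 2 := by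
    have hζ : dist (f v) (g f fs hconv n v) ≤ mod f (ηs f fs hconv n / 2) := by
      rw [← ζs_def, dist_comm]
      exact le_trans (hg f fs hconv hf n v) (εs_le_ζ f fs hconv n)
    exact mod_spec (by linarith [ηs_pos f fs hconv n]) hf hζ
  calc dist (g f fs hconv n (f v)) (f (g f fs hconv n v))
      ≤ dist (g f fs hconv n (f v)) (f (f v))
        + dist (f (f v)) (f (g f fs hconv n v)) := dist_triangle _ _ _
  _ ≤ εs f fs hconv n + ηs f fs hconv n / 2 := add_le_add d1 d2
  _ ≤ ηs f fs hconv n := by linarith [εs_le_η2 f fs hconv n]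

lemma dist_Gc_tail {n m : ℕ} (hnm : n ≤ m) :
    dist (Gc f fs hconv hf n) (Gc f fs hconv hf m)
      ≤ 2 * Bs f fs hconv n - 2 * Bs f fs hconv m := by
  induction m, hnm using Nat.le_induction with
  | base => simp
  | succ m hm ih =>
    have h1 := dist_Gc_succ f fs hconv hf m
    have h2 := Bs_succ_le f fs hconv m
    calc dist (Gc f fs hconv hf n) (Gc f fs hconv hf (m+1))
        ≤ dist (Gc f fs hconv hf n) (Gc f fs hconv hf m)
          + dist (Gc f fs hconv hf (m+1)) (Gc f fs hconv hf m) := by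
          rw [dist_comm (Gc f fs hconv hf (m+1))]; exact dist_triangle _ _ _
    _ ≤ (2 * Bs f fs hconv n - 2 * Bs f fs hconv m) + Bs f fs hconv m := by
          linarith
    _ ≤ 2 * Bs f fs hconv n - 2 * Bs f fs hconv (m+1) := by linarith

end Construction

end Stmt10Aux

theorem stmt10 {Y : Type*} [MetricSpace Y] [CompactSpace Y]
    (f : Y → Y) (hf : Continuous f)
    (fs : ℕ → Y ≃ₜ Y)
    (hconv : TendstoUniformly (fun n x => fs n x) f atTop) :
    ∃ (fhat : Y ≃ₜ Y) (h : Y → Y),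
      Continuous h ∧ Function.Surjective h ∧ h ∘ fhat = f ∘ h := by
  classical
  open Stmt10Aux in
  -- Cauchy sequences and limits
  have cauchyF : CauchySeq (Fc f fs hconv) := by
    refine cauchySeq_of_le_geometric (1/2) (3 * Bs f fs hconv 0) (by norm_num)
      (fun n => ?_)
    have h1 := dist_Fc_Gc f fs hconv hf n
    have h2 := dist_Gc_succ f fs hconv hf n
    have h3 := dist_Fc_Gc f fs hconv hf (n+1)
    have h4 := Bs_succ_le f fs hconv n
    have h5 := Bs_le_geom f fs hconv n
    have h6 := Bs_pos f fs hconv n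
    calc dist (Fc f fs hconv n) (Fc f fs hconv (n+1))
        ≤ dist (Fc f fs hconv n) (Gc f fs hconv hf n)
          + dist (Gc f fs hconv hf n) (Gc f fs hconv hf (n+1))
          + dist (Gc f fs hconv hf (n+1)) (Fc f fs hconv (n+1)) :=
            dist_triangle4 _ _ _ _
    _ ≤ Bs f fs hconv n + Bs f fs hconv n + Bs f fs hconv (n+1) := by
          have h2' : dist (Gc f fs hconv hf n) (Gc f fs hconv hf (n+1))
              ≤ Bs f fs hconv n := by rw [dist_comm]; exact h2
          have h3' : dist (Gc f fs hconv hf (n+1)) (Fc f fs hconv (n+1))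
              ≤ Bs f fs hconv (n+1) := by rw [dist_comm]; exact h3
          exact add_le_add (add_le_add h1 h2') h3'
    _ ≤ 3 * Bs f fs hconv n := by linarith
    _ ≤ 3 * Bs f fs hconv 0 * (1/2)^n := by rw [mul_assoc]; linarith
  obtain ⟨φC, hφC⟩ := cauchySeq_tendsto_of_complete cauchyF
  have cauchyh : CauchySeq (hc f fs hconv hf) := by
    refine cauchySeq_of_le_geometric (1/2) 1 (by norm_num) (fun n => ?_)
    rw [one_mul, dist_comm]
    exact dist_hc f fs hconv hf n
  obtain ⟨hC, hhC⟩ := cauchySeq_tendsto_of_complete cauchyh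
  -- Bs tends to zero
  have hBs0 : Filter.Tendsto (Bs f fs hconv) atTop (𝓝 0) := by
    refine squeeze_zero (fun n => (Bs_pos f fs hconv n).le)
      (Bs_le_geom f fs hconv) ?_
    have := (tendsto_pow_atTop_nhds_zero_of_lt_one (by norm_num : (0:ℝ) ≤ 1/2)
      (by norm_num)).const_mul (Bs f fs hconv 0)
    simpa using this
  -- Gc also tends to φC
  have hGc : Filter.Tendsto (Gc f fs hconv hf) atTop (𝓝 φC) := by
    refine hφC.congr_dist ?_
    refine squeeze_zero (fun n => dist_nonneg) (fun n => ?_) hBs0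
    exact dist_Fc_Gc f fs hconv hf n
  -- quantitative closeness of Gc n to the limit
  have hGclose : ∀ n, dist (Gc f fs hconv hf n) φC ≤ 2 * Bs f fs hconv n := by
    intro n
    have ht : Filter.Tendsto (fun m => dist (Gc f fs hconv hf n)
        (Gc f fs hconv hf m)) atTop (𝓝 (dist (Gc f fs hconv hf n) φC)) :=
      tendsto_const_nhds.dist hGc
    refine le_of_tendsto ht ?_
    filter_upwards [Filter.eventually_ge_atTop n] with m hm
    have := dist_Gc_tail f fs hconv hf hm
    have := Bs_pos f fs hconv m
    linarith
  -- injectivity of the limit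
  have hinj : Function.Injective φC := by
    intro x y hxy
    have key : ∀ k : ℕ, dist x y ≤ (1/2)^k := by
      intro k
      set a := (Hs f fs hconv (k+1)).symm x with ha
      set b := (Hs f fs hconv (k+1)).symm y with hb
      have hd : dist (Gc f fs hconv hf (k+1) x) (Gc f fs hconv hf (k+1) y)
          ≤ γs f fs hconv (k+1) := by
        have e1 : dist (Gc f fs hconv hf (k+1) x) (φC x)
            ≤ 2 * Bs f fs hconv (k+1) :=
          le_trans (ContinuousMap.dist_apply_le_dist x) (hGclose (k+1))
        have e2 : dist (Gc f fs hconv hf (k+1) y) (φC y)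
            ≤ 2 * Bs f fs hconv (k+1) :=
          le_trans (ContinuousMap.dist_apply_le_dist y) (hGclose (k+1))
        have e3 := Bs_le_γ4 f fs hconv (k+1)
        calc dist (Gc f fs hconv hf (k+1) x) (Gc f fs hconv hf (k+1) y)
            ≤ dist (Gc f fs hconv hf (k+1) x) (φC x)
              + dist (φC x) (Gc f fs hconv hf (k+1) y) := dist_triangle _ _ _
        _ = dist (Gc f fs hconv hf (k+1) x) (φC x)
              + dist (Gc f fs hconv hf (k+1) y) (φC y) := by
              rw [hxy, dist_comm (φC y)]
        _ ≤ γs f fs hconv (k+1) := by linarith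
      -- apply the γ-modulus
      have hfab : dist (f a) (f b)
          ≤ min ((1/2 : ℝ)^(k+1)) (dp f fs hconv (k+1) / 2) := by
        rw [γs_def] at hd
        have := mod_spec (lt_min (by positivity)
          (by linarith [dp_pos f fs hconv (k+1)]))
          (Hs f fs hconv (k+1)).symm.continuous hd
        have hx' : (Hs f fs hconv (k+1)).symm (Gc f fs hconv hf (k+1) x)
            = f a := by
          show (Hs f fs hconv (k+1)).symm
            (Hs f fs hconv (k+1) (f ((Hs f fs hconv (k+1)).symm x))) = _
          rw [Homeomorph.symm_apply_apply]
        have hy' : (Hs f fs hconv (k+1)).symm (Gc f fs hconv hf (k+1) y)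
            = f b := by
          show (Hs f fs hconv (k+1)).symm
            (Hs f fs hconv (k+1) (f ((Hs f fs hconv (k+1)).symm y))) = _
          rw [Homeomorph.symm_apply_apply]
        rwa [hx', hy'] at this
      have hfab2 : dist (f a) (f b) ≤ δs f fs hconv k / 2 := by
        have := min_le_right ((1/2 : ℝ)^(k+1)) (dp f fs hconv (k+1) / 2)
        rw [dp_succ] at this
        linarith [hfab.trans this]
      -- go down one level
      set a' := (Hs f fs hconv k).symm x with ha'
      set b' := (Hs f fs hconv k).symm y with hb'
      have hga : g f fs hconv k a = a' := by
        rw [ha, symm_succ, Homeomorph.apply_symm_apply, ha']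
      have hgb : g f fs hconv k b = b' := by
        rw [hb, symm_succ, Homeomorph.apply_symm_apply, hb']
      have hab' : dist a' b' ≤ δs f fs hconv k := by
        have d1 : dist a' (f a) ≤ εs f fs hconv k := by
          rw [← hga]; exact hg f fs hconv hf k a
        have d2 : dist (f b) b' ≤ εs f fs hconv k := by
          rw [← hgb, dist_comm]; exact hg f fs hconv hf k b
        have d3 := εs_le_δ4 f fs hconv k
        calc dist a' b' ≤ dist a' (f a) + dist (f a) (f b) + dist (f b) b' :=
              dist_triangle4 _ _ _ _
        _ ≤ δs f fs hconv k := by linarith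
      have final : dist (Hs f fs hconv k a') (Hs f fs hconv k b')
          ≤ (1/2 : ℝ)^k := by
        rw [δs_def] at hab'
        exact mod_spec (by positivity) (Hs f fs hconv k).continuous hab'
      rwa [ha', hb', Homeomorph.apply_symm_apply, Homeomorph.apply_symm_apply]
        at final
    have hdist0 : dist x y ≤ 0 :=
      ge_of_tendsto (tendsto_pow_atTop_nhds_zero_of_lt_one
        (by norm_num : (0:ℝ) ≤ 1/2) (by norm_num))
        (Filter.Eventually.of_forall key)
    exact dist_le_zero.mp hdist0
  -- surjectivity of the limit
  have hφCsurj : Function.Surjective φC := by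
    refine surj_of_tendsto hφC (fun n => ?_)
    intro y
    refine ⟨Hs f fs hconv n ((g f fs hconv n).symm ((Hs f fs hconv n).symm y)),
      ?_⟩
    show Hs f fs hconv n (g f fs hconv n ((Hs f fs hconv n).symm _)) = y
    rw [Homeomorph.symm_apply_apply, Homeomorph.apply_symm_apply,
      Homeomorph.apply_symm_apply]
  -- f is surjective
  have hfsurj : Function.Surjective f := by
    have htend : Filter.Tendsto
        (fun n => (⟨fs n, (fs n).continuous⟩ : C(Y, Y))) atTop
        (𝓝 (⟨f, hf⟩ : C(Y, Y))) := by
      rw [ContinuousMap.tendsto_iff_tendstoUniformly]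
      exact hconv
    have := surj_of_tendsto htend (fun n => (fs n).surjective)
    exact this
  -- surjectivity of hC
  have hhCsurj : Function.Surjective hC := by
    refine surj_of_tendsto hhC (fun n => ?_)
    exact (hfsurj.iterate n).comp (Hs f fs hconv n).symm.surjective
  -- the homeomorphism
  let E : Y ≃ Y := Equiv.ofBijective φC ⟨hinj, hφCsurj⟩
  have hEcont : Continuous E := φC.continuous
  refine ⟨hEcont.homeoOfEquivCompactToT2, hC, hC.continuous, hhCsurj, ?_⟩
  funext x
  show hC (E x) = f (hC x)
  have hEx : E x = φC x := rfl
  rw [hEx]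
  -- the commuting identity in the limit
  have key : ∀ n, hc f fs hconv hf (n+1) (Fc f fs hconv n x)
      = f (hc f fs hconv hf n x) := by
    intro n
    show f^[n+1] ((Hs f fs hconv (n+1)).symm (Fc f fs hconv n x))
      = f (f^[n] ((Hs f fs hconv n).symm x))
    have : (Hs f fs hconv (n+1)).symm (Fc f fs hconv n x)
        = (Hs f fs hconv n).symm x := by
      rw [symm_succ]
      show (g f fs hconv n).symm ((Hs f fs hconv n).symm
        (Hs f fs hconv n (g f fs hconv n ((Hs f fs hconv n).symm x)))) = _
      rw [Homeomorph.symm_apply_apply, Homeomorph.symm_apply_apply]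
    rw [this, Function.iterate_succ_apply']
  have e1 : Filter.Tendsto (fun n => hc f fs hconv hf (n+1)) atTop (𝓝 hC) :=
    hhC.comp (tendsto_add_atTop_nat 1)
  have e2 : Filter.Tendsto (fun n => Fc f fs hconv n x) atTop (𝓝 (φC x)) :=
    ((continuous_eval_const x).tendsto φC).comp hφC
  have t1 : Filter.Tendsto (fun n => hc f fs hconv hf (n+1)
      (Fc f fs hconv n x)) atTop (𝓝 (hC (φC x))) :=
    (continuous_eval.tendsto (hC, φC x)).comp
      (e1.prodMk_nhds e2)
  have e3 : Filter.Tendsto (fun n => hc f fs hconv hf n x) atTop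
      (𝓝 (hC x)) :=
    ((continuous_eval_const x).tendsto hC).comp hhC
  have t2 : Filter.Tendsto (fun n => f (hc f fs hconv hf n x)) atTop
      (𝓝 (f (hC x))) := (hf.tendsto _).comp e3
  have t1' : Filter.Tendsto (fun n => f (hc f fs hconv hf n x)) atTop
      (𝓝 (hC (φC x))) := by
    refine t1.congr (fun n => ?_)
    exact key n
  exact tendsto_nhds_unique t1' t2
end

section
/- Let A : ℝ² → ℝ² be an invertible linear map with A(ℤ²) ⊆ ℤ². Let F, F̂ : ℝ² → ℝ² be continuous maps satisfying F(x+v) = F(x)+v and F̂(x+v) = F̂(x)+v for all x ∈ ℝ², v ∈ ℤ², and let R : ℝ² → ℝ² be a continuous map satisfying R(x+v) = R(x) + A v for all x ∈ ℝ², v ∈ ℤ². If F ∘ R = R ∘ F̂, then ρ(F) = A(ρ(F̂)), the image of the rotation set ρ(F̂) under A. -/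
open Filter Topology

/-- The Misiurewicz–Ziemian rotation set of a lift `F : ℝ² → ℝ²`. -/
def rotSet (F : ℝ × ℝ → ℝ × ℝ) : Set (ℝ × ℝ) :=
  ⋂ m : ℕ, closure (⋃ n ∈ Set.Ioi m,
    {w : ℝ × ℝ | ∃ x : ℝ × ℝ, w = ((n : ℝ))⁻¹ • (F^[n] x - x)})

/-- A map `ℝ² → ℝ²` commuting with all integer translations. -/
def Equivariant (g : ℝ × ℝ → ℝ × ℝ) : Prop :=
  ∀ (x : ℝ × ℝ) (v : ℤ × ℤ),
    g (x + ((v.1 : ℝ), (v.2 : ℝ))) = g x + ((v.1 : ℝ), (v.2 : ℝ))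


open Finset

lemma zm_addself : ∀ x : ZMod 2, x + x = 0 := by decide
lemma zm_cancel : ∀ x y : ZMod 2, (x + y) + x = y := by decide
lemma zm_tele (u : ℕ → ZMod 2) (m : ℕ) :
    ∑ i ∈ range m, (u i + u (i + 1)) = u 0 + u m := by
  induction m with
  | zero => exact (zm_addself (u 0)).symm
  | succ k ih =>
    rw [sum_range_succ, ih]
    have : ∀ x y z : ZMod 2, (x + y) + (y + z) = x + z := by decide
    exact this _ _ _


noncomputable section BrouwerTri

def Tri (c : ℝ) : Set (ℝ × ℝ) := {p | 0 ≤ p.1 ∧ 0 ≤ p.2 ∧ p.1 + p.2 ≤ c}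

def gpt (c : ℝ) (n i j : ℕ) : ℝ × ℝ := ((i : ℝ) * (c / n), (j : ℝ) * (c / n))

def lab (f : ℝ × ℝ → ℝ × ℝ) (c : ℝ) (n i j : ℕ) : Fin 3 :=
  if (f (gpt c n i j)).1 < (gpt c n i j).1 then 1
  else if (f (gpt c n i j)).2 < (gpt c n i j).2 then 2 else 0


def Af (x : Fin 3) : ZMod 2 := if x = 0 then 1 else 0
def Bf (x : Fin 3) : ZMod 2 := if x = 1 then 1 else 0
def EE (x y : Fin 3) : ZMod 2 := Af x * Bf y + Af y * Bf x

lemma EE_zero_b : ∀ x y : Fin 3, x ≠ 1 → y ≠ 1 → EE x y = 0 := by decide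
lemma EE_zero_a : ∀ x y : Fin 3, x ≠ 0 → y ≠ 0 → EE x y = 0 := by decide
lemma EE_bottom : ∀ x y : Fin 3, x ≠ 2 → y ≠ 2 → EE x y = Af x + Af y := by decide
lemma fin3_eq_zero : ∀ x : Fin 3, x ≠ 1 → x ≠ 2 → x = 0 := by decide
lemma fin3_eq_one : ∀ x : Fin 3, x ≠ 0 → x ≠ 2 → x = 1 := by decide
lemma EE_full : ∀ x y z : Fin 3, EE x y + EE x z + EE y z ≠ 0 →
    (x = 0 ∨ y = 0 ∨ z = 0) ∧ (x = 1 ∨ y = 1 ∨ z = 1) ∧ (x = 2 ∨ y = 2 ∨ z = 2) := by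
  decide

def Ee (f : ℝ × ℝ → ℝ × ℝ) (c : ℝ) (n i j k l : ℕ) : ZMod 2 :=
  EE (lab f c n i j) (lab f c n k l)

def Qh (f : ℝ × ℝ → ℝ × ℝ) (c : ℝ) (n i j : ℕ) : ZMod 2 := Ee f c n i j (i+1) j
def Qv (f : ℝ × ℝ → ℝ × ℝ) (c : ℝ) (n i j : ℕ) : ZMod 2 := Ee f c n i j i (j+1)
def Qd (f : ℝ × ℝ → ℝ × ℝ) (c : ℝ) (n i j : ℕ) : ZMod 2 := Ee f c n (i+1) j i (j+1)

def eL (f : ℝ × ℝ → ℝ × ℝ) (c : ℝ) (n i j : ℕ) : ZMod 2 :=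
  Qh f c n i j + Qv f c n i j + Qd f c n i j
def eU (f : ℝ × ℝ → ℝ × ℝ) (c : ℝ) (n i j : ℕ) : ZMod 2 :=
  Qd f c n i j + Qv f c n (i+1) j + Qh f c n i (j+1)

variable {f : ℝ × ℝ → ℝ × ℝ} {c : ℝ} {n : ℕ}

lemma gpt_mem (hc : 0 ≤ c) (hn : 0 < n) {i j : ℕ} (hij : i + j ≤ n) :
    gpt c n i j ∈ Tri c := by
  have hcn : 0 ≤ c / n := by positivity
  simp only [Tri, gpt, Set.mem_setOf_eq]
  refine ⟨by positivity, by positivity, ?_⟩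
  have h1 : (i : ℝ) * (c / n) + (j : ℝ) * (c / n) = ((i + j : ℕ) : ℝ) * (c / n) := by
    push_cast; ring
  rw [h1]
  calc ((i + j : ℕ) : ℝ) * (c / n) ≤ (n : ℝ) * (c / n) := by
        apply mul_le_mul_of_nonneg_right _ hcn; exact_mod_cast hij
    _ = c := by field_simp

lemma lab_one {i j : ℕ} (h : lab f c n i j = 1) :
    (f (gpt c n i j)).1 < (gpt c n i j).1 := by
  by_contra hlt
  unfold lab at h
  rw [if_neg hlt] at h
  split_ifs at h <;> simp_all

lemma lab_two {i j : ℕ} (h : lab f c n i j = 2) :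
    (f (gpt c n i j)).2 < (gpt c n i j).2 := by
  unfold lab at h
  split_ifs at h with h1 h2
  · simp_all
  · exact h2
  · simp_all

lemma lab_zero {i j : ℕ} (h : lab f c n i j = 0) :
    (gpt c n i j).1 ≤ (f (gpt c n i j)).1 ∧ (gpt c n i j).2 ≤ (f (gpt c n i j)).2 := by
  unfold lab at h
  split_ifs at h with h1 h2
  · simp_all
  · simp_all
  · exact ⟨le_of_not_gt h1, le_of_not_gt h2⟩

section Boundary

variable (hc : 0 ≤ c) (hn : 0 < n) (hm : ∀ p ∈ Tri c, f p ∈ Tri c)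
  (hfix : ∀ p ∈ Tri c, f p ≠ p)

include hc hn hm

lemma lab_left {j : ℕ} (hj : j ≤ n) : lab f c n 0 j ≠ 1 := by
  intro h
  have h1 := lab_one h
  have hmem := hm _ (gpt_mem hc hn (by omega : 0 + j ≤ n))
  have : (gpt c n 0 j).1 = 0 := by simp [gpt]
  rw [this] at h1
  exact absurd hmem.1 (not_le.mpr h1)

lemma lab_bottom {i : ℕ} (hi : i ≤ n) : lab f c n i 0 ≠ 2 := by
  intro h
  have h1 := lab_two h
  have hmem := hm _ (gpt_mem hc hn (by omega : i + 0 ≤ n))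
  have : (gpt c n i 0).2 = 0 := by simp [gpt]
  rw [this] at h1
  exact absurd hmem.2.1 (not_le.mpr h1)

include hfix in
lemma lab_hyp {i j : ℕ} (hij : i + j = n) : lab f c n i j ≠ 0 := by
  intro h
  have hz := lab_zero h
  have hmemT := gpt_mem hc hn (le_of_eq hij)
  have hmem := hm _ hmemT
  have hsum : (gpt c n i j).1 + (gpt c n i j).2 = c := by
    simp only [gpt]
    have : (i : ℝ) * (c / n) + (j : ℝ) * (c / n) = ((i + j : ℕ) : ℝ) * (c / n) := by
      push_cast; ring
    rw [this, hij]
    field_simp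
  have hle : (f (gpt c n i j)).1 + (f (gpt c n i j)).2 ≤
      (gpt c n i j).1 + (gpt c n i j).2 := by
    rw [hsum]; exact hmem.2.2
  have e1 : (f (gpt c n i j)).1 = (gpt c n i j).1 := by
    have := hz.2; nlinarith [hz.1]
  have e2 : (f (gpt c n i j)).2 = (gpt c n i j).2 := by nlinarith [hz.1, hz.2]
  exact hfix _ hmemT (Prod.ext e1 e2)

end Boundary


section Parity

variable (hc : 0 ≤ c) (hn : 0 < n) (hm : ∀ p ∈ Tri c, f p ∈ Tri c)
  (hfix : ∀ p ∈ Tri c, f p ≠ p)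

include hc hn hm hfix

lemma parity :
    (∑ i ∈ range n, ∑ j ∈ range (n - i), eL f c n i j)
      + (∑ i ∈ range n, ∑ j ∈ range (n - 1 - i), eU f c n i j) = 1 := by
  have hsplitL : ∀ i ∈ range n, ∑ j ∈ range (n - i), eL f c n i j
      = (∑ j ∈ range (n - i), Qh f c n i j) + (∑ j ∈ range (n - i), Qv f c n i j)
        + (∑ j ∈ range (n - i), Qd f c n i j) := by
    intro i _
    simp only [eL, Finset.sum_add_distrib]
  have hsplitU : ∀ i ∈ range n, ∑ j ∈ range (n - 1 - i), eU f c n i j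
      = (∑ j ∈ range (n - 1 - i), Qd f c n i j)
        + (∑ j ∈ range (n - 1 - i), Qv f c n (i+1) j)
        + (∑ j ∈ range (n - 1 - i), Qh f c n i (j+1)) := by
    intro i _
    simp only [eU, Finset.sum_add_distrib]
  rw [Finset.sum_congr rfl hsplitL, Finset.sum_congr rfl hsplitU]
  rw [Finset.sum_add_distrib, Finset.sum_add_distrib, Finset.sum_add_distrib,
    Finset.sum_add_distrib]
  set H1 := ∑ i ∈ range n, ∑ j ∈ range (n - i), Qh f c n i j with hH1
  set V1 := ∑ i ∈ range n, ∑ j ∈ range (n - i), Qv f c n i j with hV1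
  set D1 := ∑ i ∈ range n, ∑ j ∈ range (n - i), Qd f c n i j with hD1
  set D2 := ∑ i ∈ range n, ∑ j ∈ range (n - 1 - i), Qd f c n i j with hD2
  set V2 := ∑ i ∈ range n, ∑ j ∈ range (n - 1 - i), Qv f c n (i+1) j with hV2
  set H2 := ∑ i ∈ range n, ∑ j ∈ range (n - 1 - i), Qh f c n i (j+1) with hH2
  have hD : D1 + D2 = 0 := by
    rw [hD1, hD2, ← Finset.sum_add_distrib]
    rw [Finset.sum_congr rfl (fun i hi => ?_), Finset.sum_const_zero]
    have hi' : i < n := Finset.mem_range.mp hi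
    have hrow : n - i = (n - 1 - i) + 1 := by omega
    rw [hrow, Finset.sum_range_succ, zm_cancel]
    have h1 : (i + 1) + (n - 1 - i) = n := by omega
    have h2 : i + ((n - 1 - i) + 1) = n := by omega
    exact EE_zero_a _ _ (lab_hyp hc hn hm hfix h1) (lab_hyp hc hn hm hfix h2)
  have hV : V1 + V2 = 0 := by
    rw [hV1, hV2]
    have hre : ∀ i ∈ range n, ∑ j ∈ range (n - 1 - i), Qv f c n (i+1) j
        = ∑ j ∈ range (n - (i+1)), Qv f c n (i+1) j := by
      intro i _
      have h' : n - 1 - i = n - (i+1) := by omega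
      rw [h']
    rw [Finset.sum_congr rfl hre, ← Finset.sum_add_distrib]
    rw [zm_tele (fun k => ∑ j ∈ range (n - k), Qv f c n k j) n]
    simp only [Nat.sub_self, Finset.range_zero, Finset.sum_empty, add_zero,
      Nat.sub_zero]
    rw [Finset.sum_congr rfl (fun j hj => ?_), Finset.sum_const_zero]
    have hj' : j < n := Finset.mem_range.mp hj
    exact EE_zero_b _ _ (lab_left hc hn hm (by omega)) (lab_left hc hn hm (by omega))
  have hH : H1 + H2 = 1 := by
    rw [hH1, hH2, ← Finset.sum_add_distrib]
    have hrow : ∀ i ∈ range n,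
        (∑ j ∈ range (n - i), Qh f c n i j + ∑ j ∈ range (n - 1 - i), Qh f c n i (j+1))
          = Qh f c n i 0 := by
      intro i hi
      have hi' : i < n := Finset.mem_range.mp hi
      have hr : n - i = (n - 1 - i) + 1 := by omega
      rw [hr, Finset.sum_range_succ']
      exact zm_cancel _ _
    rw [Finset.sum_congr rfl hrow]
    have hbot : ∀ i ∈ range n, Qh f c n i 0
        = (fun k => Af (lab f c n k 0)) i + (fun k => Af (lab f c n k 0)) (i + 1) := by
      intro i hi
      have hi' : i < n := Finset.mem_range.mp hi
      exact EE_bottom _ _ (lab_bottom hc hn hm (by omega)) (lab_bottom hc hn hm (by omega))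
    rw [Finset.sum_congr rfl hbot, zm_tele]
    have l00 : lab f c n 0 0 = 0 :=
      fin3_eq_zero _ (lab_left hc hn hm (by omega)) (lab_bottom hc hn hm (by omega))
    have ln0 : lab f c n n 0 = 1 :=
      fin3_eq_one _ (lab_hyp hc hn hm hfix (by omega)) (lab_bottom hc hn hm le_rfl)
    simp [Af, l00, ln0]
  have : H1 + V1 + D1 + (D2 + V2 + H2) = (H1 + H2) + (V1 + V2) + (D1 + D2) := by ring
  rw [this, hH, hV, hD, add_zero, add_zero]

end Parity

lemma gpt_dist (hc : 0 ≤ c) {i j k l : ℕ}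
    (h1 : i ≤ k + 1) (h2 : k ≤ i + 1) (h3 : j ≤ l + 1) (h4 : l ≤ j + 1) :
    dist (gpt c n i j) (gpt c n k l) ≤ c / n := by
  have hcn : (0:ℝ) ≤ c / n := by positivity
  have key : ∀ a b : ℕ, a ≤ b + 1 → b ≤ a + 1 →
      dist ((a:ℝ) * (c / n)) ((b:ℝ) * (c / n)) ≤ c / n := by
    intro a b hab hba
    have hab' : (a:ℝ) ≤ (b:ℝ) + 1 := by exact_mod_cast hab
    have hba' : (b:ℝ) ≤ (a:ℝ) + 1 := by exact_mod_cast hba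
    rw [Real.dist_eq, ← sub_mul, abs_mul, abs_of_nonneg hcn]
    calc |(a:ℝ) - b| * (c / n) ≤ 1 * (c / n) := by
          apply mul_le_mul_of_nonneg_right _ hcn
          rw [abs_le]
          constructor <;> linarith
      _ = c / n := one_mul _
  rw [Prod.dist_eq]
  exact max_le (key i k h1 h2) (key j l h3 h4)

lemma exists_triple (hc : 0 ≤ c) (hn : 0 < n) (hm : ∀ p ∈ Tri c, f p ∈ Tri c)
    (hfix : ∀ p ∈ Tri c, f p ≠ p) :
    ∃ u v w : ℝ × ℝ, u ∈ Tri c ∧ v ∈ Tri c ∧ w ∈ Tri c ∧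
      dist v u ≤ c / n ∧ dist w u ≤ c / n ∧
      u.1 ≤ (f u).1 ∧ u.2 ≤ (f u).2 ∧ (f v).1 < v.1 ∧ (f w).2 < w.2 := by
  have hsum := parity hc hn hm hfix
  -- some cell has a fully labelled triangle
  have hex : ∃ i j : ℕ, i + j + 1 ≤ n ∧
      ∃ a1 b1 a2 b2 a3 b3 : ℕ, a1 + b1 ≤ n ∧ a2 + b2 ≤ n ∧ a3 + b3 ≤ n ∧
        a1 ≤ a2 + 1 ∧ a2 ≤ a1 + 1 ∧ b1 ≤ b2 + 1 ∧ b2 ≤ b1 + 1 ∧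
        a1 ≤ a3 + 1 ∧ a3 ≤ a1 + 1 ∧ b1 ≤ b3 + 1 ∧ b3 ≤ b1 + 1 ∧
        a2 ≤ a3 + 1 ∧ a3 ≤ a2 + 1 ∧ b2 ≤ b3 + 1 ∧ b3 ≤ b2 + 1 ∧
        EE (lab f c n a1 b1) (lab f c n a2 b2) + EE (lab f c n a1 b1) (lab f c n a3 b3)
          + EE (lab f c n a2 b2) (lab f c n a3 b3) ≠ 0 := by
    by_cases hL : (∑ i ∈ range n, ∑ j ∈ range (n - i), eL f c n i j) ≠ 0
    · obtain ⟨i, hi, hrow⟩ := Finset.exists_ne_zero_of_sum_ne_zero hL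
      obtain ⟨j, hj, hcell⟩ := Finset.exists_ne_zero_of_sum_ne_zero hrow
      have hi' : i < n := Finset.mem_range.mp hi
      have hj' : j < n - i := Finset.mem_range.mp hj
      refine ⟨i, j, by omega, i, j, i+1, j, i, j+1, by omega, by omega, by omega,
        by omega, by omega, by omega, by omega, by omega, by omega, by omega,
        by omega, by omega, by omega, by omega, by omega, ?_⟩
      simpa [eL, Qh, Qv, Qd, Ee] using hcell
    · push_neg at hL
      rw [hL, zero_add] at hsum
      have hU : (∑ i ∈ range n, ∑ j ∈ range (n - 1 - i), eU f c n i j) ≠ 0 := by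
        rw [hsum]; exact one_ne_zero
      obtain ⟨i, hi, hrow⟩ := Finset.exists_ne_zero_of_sum_ne_zero hU
      obtain ⟨j, hj, hcell⟩ := Finset.exists_ne_zero_of_sum_ne_zero hrow
      have hi' : i < n := Finset.mem_range.mp hi
      have hj' : j < n - 1 - i := Finset.mem_range.mp hj
      refine ⟨i, j, by omega, i+1, j, i, j+1, i+1, j+1, by omega, by omega, by omega,
        by omega, by omega, by omega, by omega, by omega, by omega, by omega,
        by omega, by omega, by omega, by omega, by omega, ?_⟩
      simpa [eU, Qh, Qv, Qd, Ee] using hcell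
  obtain ⟨i, j, hij, a1, b1, a2, b2, a3, b3, hs1, hs2, hs3,
    e11, e12, e13, e14, e21, e22, e23, e24, e31, e32, e33, e34, hEE⟩ := hex
  obtain ⟨h0, h1, h2⟩ := EE_full _ _ _ hEE
  set P1 := gpt c n a1 b1 with hP1
  set P2 := gpt c n a2 b2 with hP2
  set P3 := gpt c n a3 b3 with hP3
  have m1 : P1 ∈ Tri c := gpt_mem hc hn hs1
  have m2 : P2 ∈ Tri c := gpt_mem hc hn hs2
  have m3 : P3 ∈ Tri c := gpt_mem hc hn hs3
  have d12 : dist P1 P2 ≤ c / n := gpt_dist hc e11 e12 e13 e14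
  have d13 : dist P1 P3 ≤ c / n := gpt_dist hc e21 e22 e23 e24
  have d23 : dist P2 P3 ≤ c / n := gpt_dist hc e31 e32 e33 e34
  have hcn : (0:ℝ) ≤ c / n := by positivity
  have hmem3 : ∀ z : ℝ × ℝ, (z = P1 ∨ z = P2 ∨ z = P3) → z ∈ Tri c := by
    rintro z (rfl | rfl | rfl) <;> assumption
  have hdist3 : ∀ z z' : ℝ × ℝ, (z = P1 ∨ z = P2 ∨ z = P3) →
      (z' = P1 ∨ z' = P2 ∨ z' = P3) → dist z z' ≤ c / n := by
    rintro z z' (rfl | rfl | rfl) (rfl | rfl | rfl) <;>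
      first
        | (rw [dist_self]; exact hcn)
        | exact d12 | exact d13 | exact d23
        | (rw [dist_comm]; first | exact d12 | exact d13 | exact d23)
  have hu : ∃ u : ℝ × ℝ, (u = P1 ∨ u = P2 ∨ u = P3) ∧
      u.1 ≤ (f u).1 ∧ u.2 ≤ (f u).2 := by
    rcases h0 with h | h | h
    · exact ⟨P1, Or.inl rfl, lab_zero h⟩
    · exact ⟨P2, Or.inr (Or.inl rfl), lab_zero h⟩
    · exact ⟨P3, Or.inr (Or.inr rfl), lab_zero h⟩
  have hv : ∃ v : ℝ × ℝ, (v = P1 ∨ v = P2 ∨ v = P3) ∧ (f v).1 < v.1 := by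
    rcases h1 with h | h | h
    · exact ⟨P1, Or.inl rfl, lab_one h⟩
    · exact ⟨P2, Or.inr (Or.inl rfl), lab_one h⟩
    · exact ⟨P3, Or.inr (Or.inr rfl), lab_one h⟩
  have hw : ∃ w : ℝ × ℝ, (w = P1 ∨ w = P2 ∨ w = P3) ∧ (f w).2 < w.2 := by
    rcases h2 with h | h | h
    · exact ⟨P1, Or.inl rfl, lab_two h⟩
    · exact ⟨P2, Or.inr (Or.inl rfl), lab_two h⟩
    · exact ⟨P3, Or.inr (Or.inr rfl), lab_two h⟩
  obtain ⟨u, humem, hu1, hu2⟩ := hu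
  obtain ⟨v, hvmem, hv1⟩ := hv
  obtain ⟨w, hwmem, hw1⟩ := hw
  exact ⟨u, v, w, hmem3 u humem, hmem3 v hvmem, hmem3 w hwmem,
    hdist3 v u hvmem humem, hdist3 w u hwmem humem, hu1, hu2, hv1, hw1⟩


lemma tri_isCompact {c : ℝ} (hc : 0 ≤ c) : IsCompact (Tri c) := by
  have hclosed : IsClosed (Tri c) := by
    have : Tri c = {p : ℝ × ℝ | 0 ≤ p.1} ∩ ({p : ℝ × ℝ | 0 ≤ p.2}
        ∩ {p : ℝ × ℝ | p.1 + p.2 ≤ c}) := by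
      ext p; simp [Tri, and_assoc]
    rw [this]
    exact (isClosed_le continuous_const continuous_fst).inter
      ((isClosed_le continuous_const continuous_snd).inter
        (isClosed_le (continuous_fst.add continuous_snd) continuous_const))
  apply (isCompact_Icc (a := ((0 : ℝ), (0 : ℝ))) (b := (c, c))).of_isClosed_subset hclosed
  rintro ⟨p1, p2⟩ ⟨h1, h2, h3⟩
  simp only [Set.mem_Icc, Prod.le_def]
  constructor
  · exact ⟨h1, h2⟩
  · constructor <;> simp_all <;> linarith

theorem brouwer_tri {c : ℝ} {f : ℝ × ℝ → ℝ × ℝ} (hc : 0 < c) (hf : Continuous f)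
    (hm : ∀ p ∈ Tri c, f p ∈ Tri c) : ∃ p ∈ Tri c, f p = p := by
  by_contra hcon
  push_neg at hcon
  have H := fun N : ℕ => exists_triple (n := N + 1) (le_of_lt hc) (Nat.succ_pos N) hm hcon
  choose u v w humem hvmem hwmem hdv hdw hu1 hu2 hv1 hw1 using H
  obtain ⟨x0, hx0, φ, hφ, hconv⟩ := (tri_isCompact (le_of_lt hc)).tendsto_subseq humem
  have hφtop : Tendsto (fun k => ((φ k : ℕ) : ℝ)) atTop atTop :=
    tendsto_natCast_atTop_atTop.comp hφ.tendsto_atTop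
  have hcdiv : Tendsto (fun k => c / ((φ k : ℝ) + 1)) atTop (𝓝 0) :=
    Tendsto.div_atTop tendsto_const_nhds (tendsto_atTop_add_const_right _ _ hφtop)
  have hdu0 : Tendsto (fun k => dist (u (φ k)) x0) atTop (𝓝 0) :=
    (tendsto_iff_dist_tendsto_zero).mp hconv
  have key : ∀ z : ℕ → ℝ × ℝ, (∀ N, dist (z N) (u N) ≤ c / (N + 1)) →
      Tendsto (z ∘ φ) atTop (𝓝 x0) := by
    intro z hz
    rw [tendsto_iff_dist_tendsto_zero]
    apply squeeze_zero (fun k => dist_nonneg)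
      (g := fun k => c / ((φ k : ℝ) + 1) + dist (u (φ k)) x0)
    · intro k
      calc dist (z (φ k)) x0 ≤ dist (z (φ k)) (u (φ k)) + dist (u (φ k)) x0 :=
            dist_triangle _ _ _
        _ ≤ c / ((φ k : ℝ) + 1) + dist (u (φ k)) x0 := by
            have := hz (φ k)
            push_cast at this ⊢
            linarith
    · simpa using hcdiv.add hdu0
  have hvconv : Tendsto (v ∘ φ) atTop (𝓝 x0) := key v (fun N => by
    have := hdv N; push_cast at this ⊢; linarith [this])
  have hwconv : Tendsto (w ∘ φ) atTop (𝓝 x0) := key w (fun N => by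
    have := hdw N; push_cast at this ⊢; linarith [this])
  have hfu : Tendsto (fun k => f (u (φ k))) atTop (𝓝 (f x0)) := (hf.tendsto x0).comp hconv
  have hfv : Tendsto (fun k => f (v (φ k))) atTop (𝓝 (f x0)) := (hf.tendsto x0).comp hvconv
  have hfw : Tendsto (fun k => f (w (φ k))) atTop (𝓝 (f x0)) := (hf.tendsto x0).comp hwconv
  have i1 : x0.1 ≤ (f x0).1 :=
    le_of_tendsto_of_tendsto' ((continuous_fst.tendsto x0).comp hconv)
      ((continuous_fst.tendsto (f x0)).comp hfu) (fun k => hu1 (φ k))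
  have i2 : x0.2 ≤ (f x0).2 :=
    le_of_tendsto_of_tendsto' ((continuous_snd.tendsto x0).comp hconv)
      ((continuous_snd.tendsto (f x0)).comp hfu) (fun k => hu2 (φ k))
  have i3 : (f x0).1 ≤ x0.1 :=
    le_of_tendsto_of_tendsto' ((continuous_fst.tendsto (f x0)).comp hfv)
      ((continuous_fst.tendsto x0).comp hvconv) (fun k => le_of_lt (hv1 (φ k)))
  have i4 : (f x0).2 ≤ x0.2 :=
    le_of_tendsto_of_tendsto' ((continuous_snd.tendsto (f x0)).comp hfw)
      ((continuous_snd.tendsto x0).comp hwconv) (fun k => le_of_lt (hw1 (φ k)))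
  exact hcon x0 hx0 (Prod.ext (le_antisymm i3 i1) (le_antisymm i4 i2))


theorem surj_add {g : ℝ × ℝ → ℝ × ℝ} (hg : Continuous g) {C : ℝ}
    (hC : ∀ x, ‖g x‖ ≤ C) (p : ℝ × ℝ) : ∃ x : ℝ × ℝ, x + g x = p := by
  have hC0 : 0 ≤ C := le_trans (norm_nonneg _) (hC 0)
  set c : ℝ := 6 * C + 6 with hc
  have hcpos : 0 < c := by positivity
  set t : ℝ × ℝ := (p.1 - c / 3, p.2 - c / 3) with ht
  set f : ℝ × ℝ → ℝ × ℝ := fun x => p - g (x + t) - t with hfdef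
  have hfc : Continuous f := by
    apply Continuous.sub _ continuous_const
    exact Continuous.sub continuous_const (hg.comp (continuous_id.add continuous_const))
  have habs1 : ∀ y : ℝ × ℝ, |(g y).1| ≤ C := by
    intro y
    calc |(g y).1| = ‖(g y).1‖ := rfl
      _ ≤ ‖g y‖ := norm_fst_le _
      _ ≤ C := hC y
  have habs2 : ∀ y : ℝ × ℝ, |(g y).2| ≤ C := by
    intro y
    calc |(g y).2| = ‖(g y).2‖ := rfl
      _ ≤ ‖g y‖ := norm_snd_le _
      _ ≤ C := hC y
  have hmap : ∀ q ∈ Tri c, f q ∈ Tri c := by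
    intro q _
    have e1 : (f q).1 = c / 3 - (g (q + t)).1 := by
      simp only [hfdef, ht, Prod.fst_sub]
      ring
    have e2 : (f q).2 = c / 3 - (g (q + t)).2 := by
      simp only [hfdef, ht, Prod.snd_sub]
      ring
    have b1 := abs_le.mp (habs1 (q + t))
    have b2 := abs_le.mp (habs2 (q + t))
    refine ⟨?_, ?_, ?_⟩
    · rw [e1, hc]; linarith [b1.2]
    · rw [e2, hc]; linarith [b2.2]
    · rw [e1, e2, hc]; linarith [b1.1, b2.1]
  obtain ⟨q, _, hq⟩ := brouwer_tri hcpos hfc hmap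
  refine ⟨q + t, ?_⟩
  have : p - g (q + t) - t = q := hq
  calc q + t + g (q + t) = (p - g (q + t) - t) + t + g (q + t) := by rw [this]
    _ = p := by abel


lemma bounded_of_periodic {G : ℝ × ℝ → ℝ × ℝ} (hGc : Continuous G)
    (hper : ∀ (x : ℝ × ℝ) (v : ℤ × ℤ), G (x + ((v.1 : ℝ), (v.2 : ℝ))) = G x) :
    ∃ C : ℝ, 0 ≤ C ∧ ∀ x, ‖G x‖ ≤ C := by
  obtain ⟨C, hC⟩ := (isCompact_Icc (a := ((0 : ℝ), (0 : ℝ)))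
    (b := ((1 : ℝ), (1 : ℝ)))).exists_bound_of_continuousOn hGc.continuousOn
  refine ⟨max C 0, le_max_right _ _, fun x => ?_⟩
  have hx : x = (Int.fract x.1, Int.fract x.2)
      + (((((⌊x.1⌋ : ℤ), (⌊x.2⌋ : ℤ)) : ℤ × ℤ).1 : ℝ),
         ((((⌊x.1⌋ : ℤ), (⌊x.2⌋ : ℤ)) : ℤ × ℤ).2 : ℝ)) := by
    apply Prod.ext <;> simp only [Prod.fst_add, Prod.snd_add, Int.fract] <;> ring
  have key : G x = G (Int.fract x.1, Int.fract x.2) := by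
    conv_lhs => rw [hx]
    exact hper _ _
  rw [key]
  refine le_trans (hC _ ?_) (le_max_left _ _)
  simp only [Set.mem_Icc, Prod.le_def]
  exact ⟨⟨Int.fract_nonneg _, Int.fract_nonneg _⟩,
    ⟨(Int.fract_lt_one _).le, (Int.fract_lt_one _).le⟩⟩

end BrouwerTri


lemma mem_rotSet_of {F : ℝ × ℝ → ℝ × ℝ} {w : ℝ × ℝ}
    (h : ∀ (m : ℕ) (ε : ℝ), 0 < ε →
      ∃ n : ℕ, m < n ∧ ∃ x, dist w ((n : ℝ)⁻¹ • (F^[n] x - x)) < ε) :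
    w ∈ rotSet F := by
  rw [rotSet, Set.mem_iInter]
  intro m
  rw [Metric.mem_closure_iff]
  intro ε hε
  obtain ⟨n, hn, x, hd⟩ := h m ε hε
  exact ⟨_, Set.mem_iUnion₂.mpr ⟨n, Set.mem_Ioi.mpr hn, ⟨x, rfl⟩⟩, hd⟩

lemma rotSet_spec {F : ℝ × ℝ → ℝ × ℝ} {w : ℝ × ℝ} (hw : w ∈ rotSet F) (m : ℕ)
    {ε : ℝ} (hε : 0 < ε) :
    ∃ n : ℕ, m < n ∧ ∃ x, dist w ((n : ℝ)⁻¹ • (F^[n] x - x)) < ε := by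
  have h1 := Set.mem_iInter.mp hw m
  obtain ⟨b, hb, hdist⟩ := Metric.mem_closure_iff.mp h1 ε hε
  obtain ⟨n, hn, hbs⟩ := Set.mem_iUnion₂.mp hb
  obtain ⟨x, rfl⟩ := hbs
  exact ⟨n, Set.mem_Ioi.mp hn, x, hdist⟩

theorem stmt12 (A : (ℝ × ℝ) ≃ₗ[ℝ] (ℝ × ℝ))
    (hA : ∀ v : ℤ × ℤ, ∃ w : ℤ × ℤ,
      A ((v.1 : ℝ), (v.2 : ℝ)) = ((w.1 : ℝ), (w.2 : ℝ)))
    (F Fhat R : ℝ × ℝ → ℝ × ℝ)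
    (hF : Continuous F) (hFhat : Continuous Fhat) (hR : Continuous R)
    (eF : Equivariant F) (eFhat : Equivariant Fhat)
    (eR : ∀ (x : ℝ × ℝ) (v : ℤ × ℤ),
      R (x + ((v.1 : ℝ), (v.2 : ℝ))) = R x + A ((v.1 : ℝ), (v.2 : ℝ)))
    (hcomm : F ∘ R = R ∘ Fhat) :
    rotSet F = (⇑A) '' rotSet Fhat := by
  classical
  set Ac : ℝ × ℝ →L[ℝ] ℝ × ℝ :=
    LinearMap.toContinuousLinearMap (A : (ℝ × ℝ) →ₗ[ℝ] (ℝ × ℝ)) with hAcdef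
  set Bc : ℝ × ℝ →L[ℝ] ℝ × ℝ :=
    LinearMap.toContinuousLinearMap (A.symm : (ℝ × ℝ) →ₗ[ℝ] (ℝ × ℝ)) with hBcdef
  have hAc : ∀ z, Ac z = A z := by
    intro z; rw [hAcdef]; simp [LinearMap.coe_toContinuousLinearMap']
  have hBc : ∀ z, Bc z = A.symm z := by
    intro z; rw [hBcdef]; simp [LinearMap.coe_toContinuousLinearMap']
  have hAcont : Continuous fun z : ℝ × ℝ => A z := by
    have : (fun z : ℝ × ℝ => A z) = fun z => Ac z := by funext z; rw [hAc]
    rw [this]; exact Ac.continuous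
  set L : ℝ := ‖Ac‖ with hLdef
  set L' : ℝ := ‖Bc‖ with hL'def
  have hL0 : 0 ≤ L := norm_nonneg _
  have hL'0 : 0 ≤ L' := norm_nonneg _
  have hdistA : ∀ z w : ℝ × ℝ, dist (A z) (A w) ≤ L * dist z w := by
    intro z w
    rw [dist_eq_norm, dist_eq_norm, ← hAc, ← hAc, ← map_sub]
    exact Ac.le_opNorm _
  have hdistB : ∀ z w : ℝ × ℝ, dist (A.symm z) (A.symm w) ≤ L' * dist z w := by
    intro z w
    rw [dist_eq_norm, dist_eq_norm, ← hBc, ← hBc, ← map_sub]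
    exact Bc.le_opNorm _
  -- the periodic part of R
  set G : ℝ × ℝ → ℝ × ℝ := fun x => R x - A x with hGdef
  have hGcont : Continuous G := hR.sub hAcont
  have hGper : ∀ (x : ℝ × ℝ) (v : ℤ × ℤ), G (x + ((v.1 : ℝ), (v.2 : ℝ))) = G x := by
    intro x v
    simp only [hGdef]
    rw [eR, map_add]
    abel
  obtain ⟨C, hC0, hC⟩ := bounded_of_periodic hGcont hGper
  -- iterated semiconjugacy
  have hiter : ∀ (n : ℕ) (x : ℝ × ℝ), F^[n] (R x) = R (Fhat^[n] x) := by
    intro n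
    induction n with
    | zero => intro x; simp
    | succ k ih =>
      intro x
      rw [Function.iterate_succ_apply', Function.iterate_succ_apply', ih x]
      exact congrFun hcomm (Fhat^[k] x)
  -- main identity
  have hiden : ∀ (n : ℕ) (y : ℝ × ℝ),
      (n : ℝ)⁻¹ • (F^[n] (R y) - R y)
        = A ((n : ℝ)⁻¹ • (Fhat^[n] y - y))
          + (n : ℝ)⁻¹ • (G (Fhat^[n] y) - G y) := by
    intro n y
    have h1 : F^[n] (R y) - R y = A (Fhat^[n] y - y) + (G (Fhat^[n] y) - G y) := by
      rw [hiter n y, map_sub]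
      simp only [hGdef]
      abel
    rw [h1, smul_add, map_smul]
  have herr : ∀ (n : ℕ) (y : ℝ × ℝ),
      ‖(n : ℝ)⁻¹ • (G (Fhat^[n] y) - G y)‖ ≤ 2 * C / n := by
    intro n y
    rw [norm_smul, Real.norm_eq_abs, abs_inv, Nat.abs_cast]
    have hb : ‖G (Fhat^[n] y) - G y‖ ≤ 2 * C := by
      refine le_trans (norm_sub_le _ _) ?_
      have := hC (Fhat^[n] y); have := hC y; linarith
    calc ((n : ℝ))⁻¹ * ‖G (Fhat^[n] y) - G y‖ ≤ (n : ℝ)⁻¹ * (2 * C) :=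
          mul_le_mul_of_nonneg_left hb (inv_nonneg.mpr n.cast_nonneg)
      _ = 2 * C / n := by rw [inv_mul_eq_div]
  -- surjectivity of R
  have hsurj : ∀ p : ℝ × ℝ, ∃ x, R x = p := by
    intro p
    set g : ℝ × ℝ → ℝ × ℝ := fun x => Bc (G x) with hgdef
    have hgc : Continuous g := Bc.continuous.comp hGcont
    have hgb : ∀ x, ‖g x‖ ≤ L' * C := by
      intro x
      refine le_trans (Bc.le_opNorm _) ?_
      exact mul_le_mul_of_nonneg_left (hC x) hL'0
    obtain ⟨x, hx⟩ := surj_add hgc hgb (Bc p)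
    refine ⟨x, ?_⟩
    have e1 : A (x + g x) = p := by
      rw [hx, hBc]
      exact A.apply_symm_apply p
    have e2 : A (x + g x) = A x + G x := by
      rw [map_add]
      congr 1
      rw [hgdef]
      simp only [hBc]
      exact A.apply_symm_apply _
    have e3 : A x + G x = R x := by simp only [hGdef]; abel
    rw [← e3, ← e2, e1]
  -- now the two inclusions
  apply Set.eq_of_subset_of_subset
  · -- rotSet F ⊆ A '' rotSet Fhat
    intro w hw
    refine ⟨A.symm w, ?_, A.apply_symm_apply w⟩
    apply mem_rotSet_of
    intro m ε hε
    obtain ⟨M0, hM0⟩ := exists_nat_gt (4 * C * (L' + 1) / ε)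
    have hδ : 0 < ε / (2 * (L' + 1)) := by positivity
    obtain ⟨n, hn, x, hdist⟩ := rotSet_spec hw (max m M0) hδ
    obtain ⟨y, rfl⟩ := hsurj x
    have hnm : m < n := lt_of_le_of_lt (le_max_left m M0) hn
    have hnM0 : (M0 : ℝ) ≤ (n : ℝ) := by
      have : M0 ≤ n := le_of_lt (lt_of_le_of_lt (le_max_right m M0) hn)
      exact_mod_cast this
    have hn0 : (0 : ℝ) < n := by
      have : 0 < n := by omega
      exact_mod_cast this
    refine ⟨n, hnm, y, ?_⟩
    set u := (n : ℝ)⁻¹ • (Fhat^[n] y - y) with hu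
    set e := (n : ℝ)⁻¹ • (G (Fhat^[n] y) - G y) with he
    set b := (n : ℝ)⁻¹ • (F^[n] (R y) - R y) with hb
    have hbe : b = A u + e := hiden n y
    have hsymm : A.symm b = u + A.symm e := by
      rw [hbe, map_add, A.symm_apply_apply]
    calc dist (A.symm w) u ≤ dist (A.symm w) (A.symm b) + dist (A.symm b) u :=
          dist_triangle _ _ _
      _ < ε / 2 + ε / 2 := by
          have hgt : 4 * C * (L' + 1) / ε < (n : ℝ) := lt_of_lt_of_le hM0 hnM0
          have h4 : 4 * C * (L' + 1) < ε * n := by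
            rw [div_lt_iff₀ hε] at hgt; linarith
          apply add_lt_add_of_lt_of_le
          · have heq : L' * (ε / (2 * (L' + 1))) + ε / (2 * (L' + 1)) = ε / 2 := by
              field_simp
            calc dist (A.symm w) (A.symm b) ≤ L' * dist w b := hdistB _ _
              _ < L' * (ε / (2 * (L' + 1))) + ε / (2 * (L' + 1)) := by
                  nlinarith [hdist, (dist_nonneg : (0:ℝ) ≤ dist w b)]
              _ = ε / 2 := heq
          · calc dist (A.symm b) u = ‖A.symm e‖ := by
                  rw [hsymm, dist_eq_norm, add_sub_cancel_left]
              _ ≤ L' * ‖e‖ := by rw [← hBc]; exact Bc.le_opNorm _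
              _ ≤ L' * (2 * C / n) := mul_le_mul_of_nonneg_left (herr n y) hL'0
              _ ≤ ε / 2 := by
                  have heq2 : L' * (2 * C / n) = 2 * C * L' / n := by ring
                  rw [heq2, div_le_iff₀ hn0]
                  nlinarith
      _ = ε := by ring
  · -- A '' rotSet Fhat ⊆ rotSet F
    rintro _ ⟨wh, hwh, rfl⟩
    apply mem_rotSet_of
    intro m ε hε
    obtain ⟨M0, hM0⟩ := exists_nat_gt (4 * C / ε)
    have hδ : 0 < ε / (2 * (L + 1)) := by positivity
    obtain ⟨n, hn, y, hdist⟩ := rotSet_spec hwh (max m M0) hδ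
    have hnm : m < n := lt_of_le_of_lt (le_max_left m M0) hn
    have hnM0 : (M0 : ℝ) ≤ (n : ℝ) := by
      have : M0 ≤ n := le_of_lt (lt_of_le_of_lt (le_max_right m M0) hn)
      exact_mod_cast this
    have hn0 : (0 : ℝ) < n := by
      have : 0 < n := by omega
      exact_mod_cast this
    refine ⟨n, hnm, R y, ?_⟩
    set u := (n : ℝ)⁻¹ • (Fhat^[n] y - y) with hu
    set e := (n : ℝ)⁻¹ • (G (Fhat^[n] y) - G y) with he
    set b := (n : ℝ)⁻¹ • (F^[n] (R y) - R y) with hb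
    have hbe : b = A u + e := hiden n y
    calc dist (A wh) b ≤ dist (A wh) (A u) + dist (A u) b := dist_triangle _ _ _
      _ < ε / 2 + ε / 2 := by
          have hgt : 4 * C / ε < (n : ℝ) := lt_of_lt_of_le hM0 hnM0
          have h4 : 4 * C < ε * n := by
            rw [div_lt_iff₀ hε] at hgt; linarith
          apply add_lt_add_of_lt_of_le
          · have heq : L * (ε / (2 * (L + 1))) + ε / (2 * (L + 1)) = ε / 2 := by
              field_simp
            calc dist (A wh) (A u) ≤ L * dist wh u := hdistA _ _
              _ < L * (ε / (2 * (L + 1))) + ε / (2 * (L + 1)) := by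
                  nlinarith [hdist, (dist_nonneg : (0:ℝ) ≤ dist wh u)]
              _ = ε / 2 := heq
          · calc dist (A u) b = ‖e‖ := by
                  rw [hbe, dist_eq_norm]
                  have : A u - (A u + e) = -e := by abel
                  rw [this, norm_neg]
              _ ≤ 2 * C / n := herr n y
              _ ≤ ε / 2 := by
                  rw [div_le_iff₀ hn0]
                  nlinarith
      _ = ε := by ring
end
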